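/- arXiv:1612.03411 — 5 statements merged into one kernel-verified Lean document; each statement's English description precedes it below -/
import Mathlib

section
/- Let s ∈ 𝒮 and, for 1 ≤ j ≤ n, let σ_j ∈ 𝒮 be the vector whose j-th coordinate is s_j and whose other coordinates are 1, and let 1 = (1,…,1) ∈ Ω_{σ_j} (note ℓ(σ_j) = s_j). Let d be a vector with r_j | d_j for all j, let (c,(f_α)) ∈ F̂_{[d]} and x ∈ ℙ¹(𝔽_q), and suppose χ_{s_j}(F_{σ_j}^{1}(x)) ≠ 0 for all 1 ≤ j ≤ n. Then for every ω ∈ Ω_s: χ_{ℓ(s)}(F_s^ω(x)) = ∏_{j=1}^n ( χ_{s_j}(F_{σ_j}^{1}(x)) )^{ω_j}. -/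
open Polynomial Finset

section Setup

variable {Fq : Type} [Field Fq] [Fintype Fq] [DecidableEq Fq]
variable {n : ℕ}

/-- The index set `R`: vectors `α` with `α j < r j`, not all zero. -/
def Rfin (r : Fin (n+1) → ℕ) : Finset (Fin (n+1) → ℕ) :=
  (Fintype.piFinset fun j => Finset.range (r j)).erase (fun _ => 0)

/-- The index set `R' = R ∪ {0}`. -/
def Rfin' (r : Fin (n+1) → ℕ) : Finset (Fin (n+1) → ℕ) :=
  Fintype.piFinset fun j => Finset.range (r j)

abbrev Rty (r : Fin (n+1) → ℕ) := {α : Fin (n+1) → ℕ // α ∈ Rfin r}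

/-- `|G| = r_1 ⋯ r_n`. -/
def cardG (r : Fin (n+1) → ℕ) : ℕ := ∏ j, r j

/-- number of elements of order `s` in `G = ℤ/r_1 × ⋯ × ℤ/r_n`. -/
noncomputable def phiG (r : Fin (n+1) → ℕ) (s : ℕ) : ℕ :=
  Nat.card {g : ∀ j, ZMod (r j) // addOrderOf g = s}

/-- `e(β) = lcm_j (r_j / gcd(r_j, β_j))`. -/
def eOf (r : Fin (n+1) → ℕ) (β : Fin (n+1) → ℕ) : ℕ :=
  Finset.univ.lcm fun j => r j / Nat.gcd (r j) (β j)

/-- `A_β`. -/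
def Aset (r : Fin (n+1) → ℕ) (β : Fin (n+1) → ℕ) : Finset (Fin (n+1) → ℕ) :=
  (Fintype.piFinset fun j => Finset.Icc 1 (r j)).filter
    fun ω => (∑ j, (r (Fin.last n) / r j) * ω j * β j) % r (Fin.last n) = 0

/-- `A_{β,p}`. -/
def Apset (r : Fin (n+1) → ℕ) (p : ℕ) (β : Fin (n+1) → ℕ) : Finset (Fin (n+1) → ℕ) :=
  (Fintype.piFinset fun j => Finset.Icc 1 (p ^ padicValNat p (r j))).filter
    fun ω => (∑ j, p ^ (padicValNat p (r (Fin.last n)) - padicValNat p (r j)) * ω j * β j)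
      % p ^ padicValNat p (r (Fin.last n)) = 0

/-- the finite set `𝒮` of vectors `s` with `s j ∣ r j`. -/
def Sfin (r : Fin (n+1) → ℕ) : Finset (Fin (n+1) → ℕ) :=
  Fintype.piFinset fun j => (r j).divisors

/-- `ℓ(s) = lcm(s_1, …, s_n)`. -/
def ells (s : Fin (n+1) → ℕ) : ℕ := Finset.univ.lcm s

/-- the finite set `Ω_s`. -/
def Omfin (s : Fin (n+1) → ℕ) : Finset (Fin (n+1) → ℕ) :=
  Fintype.piFinset fun j => (Finset.Icc 1 (s j)).filter fun w => Nat.Coprime w (s j)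

/-- `χ_m = χ^{(q-1)/m}`. -/
noncomputable def chim (χ : MulChar Fq ℂ) (m : ℕ) : MulChar Fq ℂ :=
  χ ^ ((Fintype.card Fq - 1) / m)

/-- the constant `c_s^ω`. -/
def csw (c : Fin (n+1) → Fq) (s ω : Fin (n+1) → ℕ) : Fq :=
  ∏ j, c j ^ ((ells s / s j * ω j) % ells s)

/-- the exponent of `f_α` in `F_s^ω`. -/
def expo (s ω α : Fin (n+1) → ℕ) : ℕ :=
  (∑ j, (ells s / s j) * ω j * α j) % ells s

/-- the polynomial `F_s^ω`. -/
noncomputable def Fsw (r : Fin (n+1) → ℕ) (c : Fin (n+1) → Fq)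
    (f : Rty r → Polynomial Fq) (s ω : Fin (n+1) → ℕ) : Polynomial Fq :=
  Polynomial.C (csw c s ω) * ∏ α : Rty r, f α ^ expo s ω (α : Fin (n+1) → ℕ)

/-- `d_j = ∑_{α ∈ R} α_j · deg f_α`. -/
noncomputable def dJ (r : Fin (n+1) → ℕ) (f : Rty r → Polynomial Fq) (j : Fin (n+1)) : ℕ :=
  ∑ α : Rty r, (α : Fin (n+1) → ℕ) j * (f α).natDegree

/-- evaluation of `F_s^ω` at a point of `ℙ¹(𝔽_q)`; `none` is the point at infinity. -/
noncomputable def FswVal (r : Fin (n+1) → ℕ) (c : Fin (n+1) → Fq)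
    (f : Rty r → Polynomial Fq) (s ω : Fin (n+1) → ℕ) : Option Fq → Fq
  | some x => (Fsw r c f s ω).eval x
  | none => if (∑ j, (ells s / s j) * ω j * dJ r f j) % ells s = 0 then csw c s ω else 0

/-- `d_j` associated to a degree vector `d`. -/
def dSum (r : Fin (n+1) → ℕ) (d : Rty r → ℕ) (j : Fin (n+1)) : ℕ :=
  ∑ α : Rty r, (α : Fin (n+1) → ℕ) j * d α

/-- membership in `F_d`. -/
def MemFd (r : Fin (n+1) → ℕ) (d : Rty r → ℕ) (f : Rty r → Polynomial Fq) : Prop :=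
  (∀ α, (f α).Monic ∧ Squarefree (f α) ∧ (f α).natDegree = d α) ∧
  ∀ α β : Rty r, α ≠ β → IsCoprime (f α) (f β)

/-- membership in `F^β_d`. -/
def MemFdB (r : Fin (n+1) → ℕ) (β : Rty r) (d : Rty r → ℕ) (f : Rty r → Polynomial Fq) : Prop :=
  (∀ α, (f α).Monic ∧ Squarefree (f α)) ∧
  ((f β).natDegree + 1 = d β) ∧ (∀ α, α ≠ β → (f α).natDegree = d α) ∧
  ∀ α γ : Rty r, α ≠ γ → IsCoprime (f α) (f γ)

/-- membership in `F_{[d]}`. -/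
def MemFdBr (r : Fin (n+1) → ℕ) (d : Rty r → ℕ) (f : Rty r → Polynomial Fq) : Prop :=
  MemFd r d f ∨ ∃ β : Rty r, MemFdB r β d f

/-- membership in `F̂_{[d]}`. -/
def MemFhat (r : Fin (n+1) → ℕ) (d : Rty r → ℕ)
    (c : Fin (n+1) → Fq) (f : Rty r → Polynomial Fq) : Prop :=
  (∀ j, c j ≠ 0) ∧ MemFdBr r d f

/-- `ζ_q(2)`. -/
noncomputable def zetaq2 (q : ℕ) : ℝ := ((1 - ((q : ℝ) ^ 2)⁻¹) * (1 - (q : ℝ)⁻¹))⁻¹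

/-- `L_N`. -/
noncomputable def Lconst (Fq : Type) [Field Fq] [Fintype Fq] (N : ℕ) : ℝ :=
  ∏ j ∈ Finset.Icc 1 N,
    ∏' P : {P : Polynomial Fq // P.Monic ∧ Irreducible P},
      (1 - (j : ℝ) / (((Fintype.card Fq : ℝ) ^ (P : Polynomial Fq).natDegree - 1) *
        ((Fintype.card Fq : ℝ) ^ (P : Polynomial Fq).natDegree + (j : ℝ))))

/-- an admissible family of values `ε_{s,ω}`. -/
def Admissible (r : Fin (n+1) → ℕ) (χ : MulChar Fq ℂ)
    (ε : (Fin (n+1) → ℕ) → (Fin (n+1) → ℕ) → ℂ) : Prop :=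
  ∃ d : Rty r → ℕ, (∀ j, r j ∣ dSum r d j) ∧
    ∃ c f, MemFhat r d c f ∧ ∃ x : Option Fq,
      ∀ s ∈ Sfin r, ∀ ω ∈ Omfin s, ε s ω = chim χ (ells s) (FswVal r c f s ω x)

/-- a `[β]`-admissible family of values `ε_{s,ω}`. -/
def BetaAdmissible (r : Fin (n+1) → ℕ) (χ : MulChar Fq ℂ) (β : Fin (n+1) → ℕ)
    (ε : (Fin (n+1) → ℕ) → (Fin (n+1) → ℕ) → ℂ) : Prop :=
  Admissible r χ ε ∧
    ∀ s ∈ Sfin r, ∀ ω ∈ Omfin s,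
      (ε s ω = 0 ↔ (fun j => (r j / s j) * ω j) ∉ Aset r β)

end Setup

section Thms

variable {Fq : Type} [Field Fq] [Fintype Fq] [DecidableEq Fq] {n : ℕ}

lemma aux_pow_mod (w : ℂ) (m a : ℕ) (hw : w ^ m = 1) : w ^ (a % m) = w ^ a := by
  conv_rhs => rw [← Nat.div_add_mod a m]
  rw [pow_add, pow_mul, hw, one_pow, one_mul]

lemma aux_pow_congr (w : ℂ) (m a b : ℕ) (hw : w ^ m = 1) (h : a ≡ b [MOD m]) :
    w ^ a = w ^ b := by
  rw [← aux_pow_mod w m a hw, ← aux_pow_mod w m b hw]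
  exact congrArg (w ^ ·) h

lemma aux_modEq_sum {ι : Type*} (t : Finset ι) (f g : ι → ℕ) (m : ℕ)
    (h : ∀ i ∈ t, f i ≡ g i [MOD m]) :
    (∑ i ∈ t, f i) ≡ (∑ i ∈ t, g i) [MOD m] := by
  classical
  induction t using Finset.induction_on with
  | empty => simp; rfl
  | insert _ _ hi ih =>
    rw [Finset.sum_insert hi, Finset.sum_insert hi]
    exact Nat.ModEq.add (h _ (Finset.mem_insert_self _ _))
      (ih fun i hi' => h i (Finset.mem_insert_of_mem hi'))

theorem stmt_11 (r : Fin (n+1) → ℕ) (hr : ∀ j, 0 < r j)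
    (hchain : ∀ i j : Fin (n+1), i ≤ j → r i ∣ r j)
    (hq : Fintype.card Fq ≡ 1 [MOD r (Fin.last n)])
    (χ : MulChar Fq ℂ) (hχ : orderOf χ = Fintype.card Fq - 1)
    (s ω : Fin (n+1) → ℕ) (hs : s ∈ Sfin r) (hω : ω ∈ Omfin s)
    (σ : Fin (n+1) → Fin (n+1) → ℕ)
    (hσ : ∀ j k, σ j k = if k = j then s j else 1)
    (d : Rty r → ℕ) (hd : ∀ j, r j ∣ dSum r d j)
    (c : Fin (n+1) → Fq) (f : Rty r → Polynomial Fq) (hcf : MemFhat r d c f)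
    (x : Option Fq)
    (hnz : ∀ j, chim χ (s j) (FswVal r c f (σ j) (fun _ => 1) x) ≠ 0) :
    chim χ (ells s) (FswVal r c f s ω x) =
      ∏ j, (chim χ (s j) (FswVal r c f (σ j) (fun _ => 1) x)) ^ (ω j) := by
  classical
  have hq2 : 1 < Fintype.card Fq := Fintype.one_lt_card
  set Q : ℕ := Fintype.card Fq - 1 with hQdef
  have hQ : 0 < Q := by omega
  -- basic divisibilities
  have hsr : ∀ j, s j ∣ r j := fun j => (Nat.mem_divisors.mp (Fintype.mem_piFinset.mp hs j)).1
  have hs0 : ∀ j, 0 < s j := fun j => Nat.pos_of_mem_divisors (Fintype.mem_piFinset.mp hs j)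
  have hrQ : r (Fin.last n) ∣ Q := (Nat.modEq_iff_dvd' (le_of_lt hq2)).mp hq.symm
  have hsl : ∀ j, s j ∣ ells s := fun j => Finset.dvd_lcm (Finset.mem_univ j)
  have hlQ : ells s ∣ Q := by
    refine dvd_trans ?_ hrQ
    exact Finset.lcm_dvd fun j _ => (hsr j).trans (hchain j (Fin.last n) (Fin.le_last j))
  have hl0 : 0 < ells s := Nat.pos_of_dvd_of_pos hlQ hQ
  have hsQ : ∀ j, s j ∣ Q := fun j => (hsl j).trans hlQ
  have hellsσ : ∀ j, ells (σ j) = s j := by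
    intro j
    refine Nat.dvd_antisymm (Finset.lcm_dvd fun k _ => ?_) ?_
    · rw [hσ j k]; split <;> simp
    · have h := Finset.dvd_lcm (f := σ j) (Finset.mem_univ j)
      rwa [hσ j j, if_pos rfl] at h
  -- evaluation of chim
  have hchim : ∀ m, m ∣ Q → 0 < m → ∀ y : Fq, chim χ m y = χ y ^ (Q / m) := by
    intro m hm h0 y
    have hne : Q / m ≠ 0 := (Nat.div_pos (Nat.le_of_dvd hQ hm) h0).ne'
    exact MulChar.pow_apply' χ hne y
  have hroot : ∀ y : Fq, y ≠ 0 → χ y ^ Q = 1 := by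
    intro y hy
    have h1 : (χ ^ Q) y = χ y ^ Q := MulChar.pow_apply' χ hQ.ne' y
    have h2 : (χ : MulChar Fq ℂ) ^ Q = 1 := by rw [← hχ]; exact pow_orderOf_eq_one χ
    rw [← h1, h2, MulChar.one_apply (isUnit_iff_ne_zero.mpr hy)]
  have hchim_root : ∀ m, m ∣ Q → 0 < m → ∀ y : Fq, y ≠ 0 → (chim χ m y) ^ m = 1 := by
    intro m hm h0 y hy
    rw [hchim m hm h0 y, ← pow_mul, Nat.div_mul_cancel hm, hroot y hy]
  have hcollapse : ∀ m m', m' ∣ m → m ∣ Q → 0 < m' → ∀ y : Fq,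
      (chim χ m y) ^ (m / m') = chim χ m' y := by
    intro m m' hmm hm h0 y
    have h0m : 0 < m := Nat.pos_of_dvd_of_pos hm hQ
    rw [hchim m hm h0m y, hchim m' (hmm.trans hm) h0 y, ← pow_mul,
      Nat.div_mul_div_comm hm hmm, mul_comm Q m, Nat.mul_div_mul_left _ _ h0m]
  have hc0 : ∀ j, c j ≠ 0 := hcf.1
  have hval_ne : ∀ j, FswVal r c f (σ j) (fun _ => 1) x ≠ 0 := by
    intro j h
    exact hnz j (by rw [h, MulChar.map_zero])
  -- the constant csw for σ j
  have hcswσ : ∀ j, csw c (σ j) (fun _ => 1) = c j ^ (1 % s j) := by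
    intro j
    have h1 : csw c (σ j) (fun _ => 1) =
        c j ^ ((ells (σ j) / σ j j * 1) % ells (σ j)) := by
      rw [csw]
      refine Finset.prod_eq_single j (fun k _ hk => ?_) (fun h => absurd (Finset.mem_univ j) h)
      rw [hellsσ j, hσ j k, if_neg hk]
      simp
    rw [h1, hellsσ j, hσ j j, if_pos rfl, Nat.div_self (hs0 j), one_mul]
  -- congruence for the σ-sums
  have hTσ : ∀ j (v : Fin (n+1) → ℕ),
      (∑ k, ells (σ j) / σ j k * 1 * v k) ≡ v j [MOD s j] := by
    intro j v
    have hterm : ∀ k ∈ Finset.univ (α := Fin (n+1)),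
        ells (σ j) / σ j k * 1 * v k ≡ (if k = j then v j else 0) [MOD s j] := by
      intro k _
      rw [hellsσ j, hσ j k]
      by_cases hk : k = j
      · subst hk
        simp only [eq_self_iff_true, if_true, Nat.div_self (hs0 k), one_mul, mul_one]
        exact Nat.ModEq.refl _
      · rw [if_neg hk, if_neg hk, Nat.div_one, mul_one]
        exact (Nat.modEq_zero_iff_dvd).mpr (dvd_mul_right _ _)
    have := aux_modEq_sum Finset.univ _ _ (s j) hterm
    simpa using this
  have hexpoσ_mod : ∀ j (v : Fin (n+1) → ℕ),
      expo (σ j) (fun _ => 1) v ≡ v j [MOD s j] := by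
    intro j v
    have : expo (σ j) (fun _ => 1) v = (∑ k, ells (σ j) / σ j k * 1 * v k) % s j := by
      rw [expo, hellsσ j]
    rw [this]
    exact (Nat.mod_modEq _ _).trans (hTσ j v)
  -- divisibility of the big sum when s j ∣ v j
  have hdivsum : ∀ (w v : Fin (n+1) → ℕ), (∀ j, s j ∣ v j) →
      (∑ j, ells s / s j * w j * v j) % ells s = 0 := by
    intro w v hv
    refine Nat.mod_eq_zero_of_dvd (Finset.dvd_sum fun j _ => ?_)
    obtain ⟨t, ht⟩ := hv j
    have h1 : ells s / s j * w j * v j = (ells s / s j * s j) * (w j * t) := by rw [ht]; ring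
    rw [h1, Nat.div_mul_cancel (hsl j)]
    exact dvd_mul_right _ _
  -- the c-part identity
  have hcpart : chim χ (ells s) (csw c s ω) = ∏ j, (chim χ (s j) (c j)) ^ ω j := by
    rw [csw, map_prod]
    refine Finset.prod_congr rfl fun j _ => ?_
    rw [map_pow, aux_pow_mod _ _ _ (hchim_root _ hlQ hl0 _ (hc0 j)), pow_mul,
      hcollapse (ells s) (s j) (hsl j) hlQ (hs0 j)]
  have hcσ : ∀ j, chim χ (s j) (csw c (σ j) fun _ => 1) = chim χ (s j) (c j) := by
    intro j
    rw [hcswσ j, map_pow, aux_pow_mod _ _ _ (hchim_root _ (hsQ j) (hs0 j) _ (hc0 j)), pow_one]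
  cases x with
  | none =>
    have hcond : ∀ j, (∑ k, ells (σ j) / σ j k * (fun _ => 1 : Fin (n+1) → ℕ) k * dJ r f k)
        % ells (σ j) = 0 := by
      intro j
      by_contra hcd
      exact hval_ne j (by simp only [FswVal, if_neg hcd])
    have hdJ : ∀ j, s j ∣ dJ r f j := by
      intro j
      have h1 := hTσ j (dJ r f)
      have h2 := hcond j
      simp only [hellsσ j, one_mul, mul_one] at h1 h2
      exact Nat.modEq_zero_iff_dvd.mp
        (h1.symm.trans (Nat.modEq_zero_iff_dvd.mpr (Nat.dvd_of_mod_eq_zero h2)))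
    have hScond : (∑ j, ells s / s j * ω j * dJ r f j) % ells s = 0 :=
      hdivsum ω (dJ r f) hdJ
    have hL : FswVal r c f s ω none = csw c s ω := by
      simp only [FswVal, if_pos hScond]
    have hR : ∀ j, FswVal r c f (σ j) (fun _ => 1) none = csw c (σ j) fun _ => 1 := by
      intro j
      simp only [FswVal, if_pos (hcond j)]
    rw [hL, hcpart]
    refine Finset.prod_congr rfl fun j _ => ?_
    rw [hR j, hcσ j]
  | some a =>
    -- evaluation at a finite point
    have heval : ∀ (s' ω' : Fin (n+1) → ℕ), FswVal r c f s' ω' (some a)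
        = csw c s' ω' * ∏ α : Rty r, (f α).eval a ^ expo s' ω' (α : Fin (n+1) → ℕ) := by
      intro s' ω'
      simp only [FswVal, Fsw, eval_mul, eval_C, eval_prod, eval_pow]
    -- zero analysis
    have hzero : ∀ α : Rty r, (f α).eval a = 0 →
        ∀ j, expo (σ j) (fun _ => 1) (α : Fin (n+1) → ℕ) = 0 := by
      intro α hα j
      have h := hval_ne j
      rw [heval (σ j) (fun _ => 1)] at h
      by_contra he
      refine h (mul_eq_zero.mpr (Or.inr ?_))
      exact Finset.prod_eq_zero (Finset.mem_univ α) (by rw [hα]; exact zero_pow he)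
    have hsα : ∀ α : Rty r, (f α).eval a = 0 → ∀ j, s j ∣ (α : Fin (n+1) → ℕ) j := by
      intro α hα j
      have h1 := hexpoσ_mod j (α : Fin (n+1) → ℕ)
      rw [hzero α hα j] at h1
      exact Nat.modEq_zero_iff_dvd.mp h1.symm
    have hexpos0 : ∀ α : Rty r, (f α).eval a = 0 → expo s ω (α : Fin (n+1) → ℕ) = 0 := by
      intro α hα
      rw [expo]
      exact hdivsum ω _ (hsα α hα)
    -- middle expression
    set g : Fin (n+1) → Rty r → ℂ := fun j α =>
      chim χ (s j) ((f α).eval a) ^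
        (if (f α).eval a = 0 then 0 else ω j * (α : Fin (n+1) → ℕ) j) with hg
    -- LHS
    have hLHS : chim χ (ells s) (FswVal r c f s ω (some a)) =
        (∏ j, (chim χ (s j) (c j)) ^ ω j) * ∏ α : Rty r, ∏ j, g j α := by
      rw [heval s ω, map_mul, hcpart, map_prod]
      congr 1
      refine Finset.prod_congr rfl fun α _ => ?_
      rw [map_pow]
      by_cases hα : (f α).eval a = 0
      · rw [hexpos0 α hα, pow_zero, hg]
        simp only [if_pos hα]
        simp
      · rw [expo, aux_pow_mod _ _ _ (hchim_root _ hlQ hl0 _ hα),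
          ← Finset.prod_pow_eq_pow_sum]
        refine Finset.prod_congr rfl fun j _ => ?_
        rw [hg]
        simp only [if_neg hα]
        rw [mul_assoc, pow_mul, hcollapse (ells s) (s j) (hsl j) hlQ (hs0 j)]
    -- RHS
    have hRHS : ∀ j, (chim χ (s j) (FswVal r c f (σ j) (fun _ => 1) (some a))) ^ ω j =
        (chim χ (s j) (c j)) ^ ω j * ∏ α : Rty r, g j α := by
      intro j
      rw [heval (σ j) (fun _ => 1), map_mul, hcσ j, map_prod, mul_pow, ← Finset.prod_pow]
      congr 1
      refine Finset.prod_congr rfl fun α _ => ?_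
      rw [map_pow, hg]
      by_cases hα : (f α).eval a = 0
      · rw [hzero α hα j, pow_zero, one_pow]
        simp only [if_pos hα]
        simp
      · simp only [if_neg hα]
        rw [aux_pow_congr _ (s j) _ _ (hchim_root _ (hsQ j) (hs0 j) _ hα)
          (hexpoσ_mod j (α : Fin (n+1) → ℕ)), ← pow_mul, mul_comm]
    calc chim χ (ells s) (FswVal r c f s ω (some a))
        = (∏ j, (chim χ (s j) (c j)) ^ ω j) * ∏ α : Rty r, ∏ j, g j α := hLHS
      _ = (∏ j, (chim χ (s j) (c j)) ^ ω j) * ∏ j, ∏ α : Rty r, g j α := by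
          rw [Finset.prod_comm]
      _ = ∏ j, ((chim χ (s j) (c j)) ^ ω j * ∏ α : Rty r, g j α) := by
          rw [Finset.prod_mul_distrib]
      _ = _ := by
          refine Finset.prod_congr rfl fun j _ => (hRHS j).symm

end Thms
end

section
/- Let p be a prime dividing r_n and let β, β' ∈ R'. If β ∼_p β', then v_p(gcd(β_j, r_j)) = v_p(gcd(β'_j, r_j)) for all 1 ≤ j ≤ n, with the convention gcd(0, r_j) = r_j. -/
open Finset

section Setup

variable {n : ℕ}

lemma mem_special (r : Fin (n+1) → ℕ) (hr : ∀ j, 0 < r j)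
    (hchain : ∀ i j : Fin (n+1), i ≤ j → r i ∣ r j)
    (p : ℕ) (hp : p.Prime) (β : Fin (n+1) → ℕ) (j : Fin (n+1)) (k : ℕ)
    (hk : k ≤ padicValNat p (r j)) :
    (fun i => if i = j then p ^ (padicValNat p (r j) - k) else p ^ padicValNat p (r i))
      ∈ Apset r p β ↔ p ^ k ∣ β j := by
  haveI : Fact p.Prime := ⟨hp⟩
  have hm : ∀ i, padicValNat p (r i) ≤ padicValNat p (r (Fin.last n)) := by
    intro i
    rw [← padicValNat_dvd_iff_le (hr (Fin.last n)).ne']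
    exact dvd_trans (pow_padicValNat_dvd) (hchain i (Fin.last n) (Fin.le_last i))
  have hkM : k ≤ padicValNat p (r (Fin.last n)) := hk.trans (hm j)
  have hmem : (fun i => if i = j then p ^ (padicValNat p (r j) - k) else p ^ padicValNat p (r i))
      ∈ Fintype.piFinset fun i => Finset.Icc 1 (p ^ padicValNat p (r i)) := by
    rw [Fintype.mem_piFinset]
    intro i
    rw [Finset.mem_Icc]
    refine ⟨?_, ?_⟩
    · split <;> exact Nat.one_le_pow _ _ hp.pos
    · split
      · next h => subst h; exact Nat.pow_le_pow_right hp.one_lt.le (Nat.sub_le _ _)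
      · exact le_refl _
  have hsum : (∑ i, p ^ (padicValNat p (r (Fin.last n)) - padicValNat p (r i)) *
        (if i = j then p ^ (padicValNat p (r j) - k) else p ^ padicValNat p (r i)) * β i)
      = p ^ (padicValNat p (r (Fin.last n)) - k) * β j + p ^ padicValNat p (r (Fin.last n)) * ∑ i ∈ univ.erase j, β i := by
    rw [← Finset.add_sum_erase _ _ (mem_univ j)]
    congr 1
    · rw [if_pos rfl, ← pow_add]
      congr 2
      have := hm j
      omega
    · rw [Finset.mul_sum]
      refine Finset.sum_congr rfl fun i hi => ?_
      rw [if_neg (Finset.ne_of_mem_erase hi), ← pow_add]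
      congr 2
      have := hm i
      omega
  simp only [Apset, Finset.mem_filter, hmem, true_and]
  rw [hsum, Nat.add_mul_mod_self_left, ← Nat.dvd_iff_mod_eq_zero,
    show (p:ℕ)^padicValNat p (r (Fin.last n))
        = p^(padicValNat p (r (Fin.last n))-k) * p^k by rw [← pow_add]; congr 1; omega,
    mul_dvd_mul_iff_left (pow_ne_zero _ hp.pos.ne')]

end Setup

theorem stmt_12 (r : Fin (n+1) → ℕ) (hr : ∀ j, 0 < r j)
    (hchain : ∀ i j : Fin (n+1), i ≤ j → r i ∣ r j)
    (p : ℕ) (hp : p.Prime) (hpr : p ∣ r (Fin.last n))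
    (β β' : Fin (n+1) → ℕ) (hβ : β ∈ Rfin' r) (hβ' : β' ∈ Rfin' r)
    (hsim : Apset r p β = Apset r p β') :
    ∀ j, padicValNat p (Nat.gcd (β j) (r j)) = padicValNat p (Nat.gcd (β' j) (r j)) := by
  haveI : Fact p.Prime := ⟨hp⟩
  intro j
  have key : ∀ k ≤ padicValNat p (r j), (p ^ k ∣ β j ↔ p ^ k ∣ β' j) := by
    intro k hk
    rw [← mem_special r hr hchain p hp β j k hk, ← mem_special r hr hchain p hp β' j k hk, hsim]
  have aux : ∀ (b b' : ℕ), (∀ k ≤ padicValNat p (r j), p ^ k ∣ b → p ^ k ∣ b') →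
      padicValNat p (Nat.gcd b (r j)) ≤ padicValNat p (Nat.gcd b' (r j)) := by
    intro b b' h
    have hg' : Nat.gcd b' (r j) ≠ 0 := Nat.gcd_ne_zero_right (hr j).ne'
    have h1 : p ^ padicValNat p (Nat.gcd b (r j)) ∣ Nat.gcd b (r j) := pow_padicValNat_dvd
    have hv : padicValNat p (Nat.gcd b (r j)) ≤ padicValNat p (r j) :=
      (padicValNat_dvd_iff_le (hr j).ne').mp (h1.trans (Nat.gcd_dvd_right _ _))
    have h2 : p ^ padicValNat p (Nat.gcd b (r j)) ∣ b' :=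
      h _ hv (h1.trans (Nat.gcd_dvd_left _ _))
    exact (padicValNat_dvd_iff_le hg').mp (Nat.dvd_gcd h2 (h1.trans (Nat.gcd_dvd_right _ _)))
  exact le_antisymm (aux _ _ fun k hk => (key k hk).mp) (aux _ _ fun k hk => (key k hk).mpr)
end

section
/- Let p be a prime dividing r_n and let β, β' ∈ R'. Then β ∼_p β' if and only if there exists an integer m with 1 ≤ m ≤ p^{v_p(e(β))} and gcd(m, p) = 1 such that β'_j ≡ m·β_j (mod p^{v_p(r_j)}) for all 1 ≤ j ≤ n. -/
open Finset

private lemma cast_mul_eq_of_modEq {N M c c' : ℕ} (h : c ≡ c' [MOD M]) (X : ZMod N)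
    (hM : ((M : ℕ) : ZMod N) * X = 0) : (c : ZMod N) * X = (c' : ZMod N) * X := by
  have key : ∀ d : ℕ, (d : ZMod N) * X = ((d % M : ℕ) : ZMod N) * X := by
    intro d
    conv_lhs => rw [← Nat.mod_add_div d M]
    push_cast
    rw [add_mul, mul_comm ((M : ℕ) : ZMod N) ((d / M : ℕ) : ZMod N), mul_assoc, hM, mul_zero,
      add_zero]
  rw [key c, key c', show c % M = c' % M from h]

private lemma sum_single_mul {n N : ℕ} (k : Fin (n+1)) (c : ZMod N) (Y : Fin (n+1) → ZMod N) :
    ∑ j, (Pi.single k c : Fin (n+1) → ZMod N) j * Y j = c * Y k := by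
  rw [Finset.sum_eq_single k]
  · rw [Pi.single_eq_same]
  · intro b _ hb; rw [Pi.single_eq_of_ne hb, zero_mul]
  · intro h; exact absurd (Finset.mem_univ k) h

private lemma exists_pow_mul {p a t : ℕ} (hp : p.Prime) (hta : t ≤ a) (x : ZMod (p ^ a))
    (hx : ((p ^ t : ℕ) : ZMod (p ^ a)) * x = 0) :
    ∃ y : ZMod (p ^ a), x = ((p ^ (a - t) : ℕ) : ZMod (p ^ a)) * y := by
  haveI : NeZero (p ^ a) := ⟨(pow_pos hp.pos a).ne'⟩
  have h1 : ((p ^ t * x.val : ℕ) : ZMod (p ^ a)) = 0 := by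
    rw [Nat.cast_mul, ZMod.natCast_rightInverse x]; exact hx
  rw [ZMod.natCast_eq_zero_iff] at h1
  have h2 : p ^ (a - t) ∣ x.val := by
    have h3 : p ^ (a - t) * p ^ t ∣ x.val * p ^ t := by
      rw [← pow_add, Nat.sub_add_cancel hta, mul_comm x.val]; exact h1
    exact (Nat.mul_dvd_mul_iff_right (pow_pos hp.pos t)).1 h3
  obtain ⟨d, hd⟩ := h2
  refine ⟨(d : ZMod (p ^ a)), ?_⟩
  conv_lhs => rw [← ZMod.natCast_rightInverse x, hd]
  rw [Nat.cast_mul]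

private lemma padicValNat_lcm_sup {ι : Type*} [DecidableEq ι] (p : ℕ) (hp : p.Prime)
    (s : Finset ι) (f : ι → ℕ) (hf : ∀ i ∈ s, f i ≠ 0) :
    padicValNat p (s.lcm f) = s.sup fun i => padicValNat p (f i) := by
  induction s using Finset.induction_on with
  | empty => simp [padicValNat.one]
  | @insert i s his ih =>
    have hfi : f i ≠ 0 := hf i (Finset.mem_insert_self i s)
    have hfs : ∀ j ∈ s, f j ≠ 0 := fun j hj => hf j (Finset.mem_insert_of_mem hj)
    have hlcm0 : s.lcm f ≠ 0 := by
      rw [Ne, Finset.lcm_eq_zero_iff]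
      rintro ⟨j, hj, hj0⟩
      exact hfs j hj hj0
    rw [Finset.lcm_insert, Finset.sup_insert, ← ih hfs]
    have hfl : lcm (f i) (s.lcm f) = Nat.lcm (f i) (s.lcm f) := rfl
    rw [hfl, ← Nat.factorization_def _ hp, ← Nat.factorization_def _ hp,
      ← Nat.factorization_def _ hp, Nat.factorization_lcm hfi hlcm0]
    simp [Finsupp.sup_apply]

private lemma mem_Apset_iff {n : ℕ} (r : Fin (n+1) → ℕ) {p : ℕ}
    (β ω : Fin (n+1) → ℕ) :
    ω ∈ Apset r p β ↔ ((∀ j, ω j ∈ Finset.Icc 1 (p ^ padicValNat p (r j))) ∧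
      ((∑ j, p ^ (padicValNat p (r (Fin.last n)) - padicValNat p (r j)) * ω j * β j : ℕ) :
        ZMod (p ^ padicValNat p (r (Fin.last n)))) = 0) := by
  simp only [Apset, Finset.mem_filter, Fintype.mem_piFinset]
  refine and_congr_right fun _ => ?_
  rw [ZMod.natCast_eq_zero_iff]
  exact Nat.dvd_iff_mod_eq_zero.symm

private lemma transfer {n : ℕ} (r : Fin (n+1) → ℕ) (p : ℕ) (hp : p.Prime)
    (haj : ∀ j, padicValNat p (r j) ≤ padicValNat p (r (Fin.last n)))
    (β β' : Fin (n+1) → ℕ) (hsub : Apset r p β ⊆ Apset r p β')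
    (z : Fin (n+1) → ZMod (p ^ padicValNat p (r (Fin.last n))))
    (hz : ∑ j, z j * ((p ^ (padicValNat p (r (Fin.last n)) - padicValNat p (r j)) * β j : ℕ) :
      ZMod (p ^ padicValNat p (r (Fin.last n)))) = 0) :
    ∑ j, z j * ((p ^ (padicValNat p (r (Fin.last n)) - padicValNat p (r j)) * β' j : ℕ) :
      ZMod (p ^ padicValNat p (r (Fin.last n)))) = 0 := by
  haveI : NeZero (p ^ padicValNat p (r (Fin.last n))) := ⟨(pow_pos hp.pos _).ne'⟩
  let ω : Fin (n+1) → ℕ := fun j =>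
    if (z j).val % p ^ padicValNat p (r j) = 0 then p ^ padicValNat p (r j)
    else (z j).val % p ^ padicValNat p (r j)
  have hbox : ∀ j, ω j ∈ Finset.Icc 1 (p ^ padicValNat p (r j)) := by
    intro j
    rw [Finset.mem_Icc]
    by_cases hc : (z j).val % p ^ padicValNat p (r j) = 0
    · simp only [ω, if_pos hc]
      exact ⟨Nat.one_le_iff_ne_zero.2 (pow_pos hp.pos _).ne', le_refl _⟩
    · simp only [ω, if_neg hc]
      exact ⟨Nat.one_le_iff_ne_zero.2 hc, le_of_lt (Nat.mod_lt _ (pow_pos hp.pos _))⟩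
  have hcong : ∀ j, ω j ≡ (z j).val [MOD p ^ padicValNat p (r j)] := by
    intro j
    by_cases hc : (z j).val % p ^ padicValNat p (r j) = 0
    · show ω j % _ = _
      simp only [ω, if_pos hc]
      rw [Nat.mod_self, hc]
    · show ω j % _ = _
      simp only [ω, if_neg hc]
      exact Nat.mod_mod_of_dvd _ dvd_rfl
  have key : ∀ γ : Fin (n+1) → ℕ,
      ((∑ j, p ^ (padicValNat p (r (Fin.last n)) - padicValNat p (r j)) * ω j * γ j : ℕ) :
        ZMod (p ^ padicValNat p (r (Fin.last n)))) =
        ∑ j, z j * ((p ^ (padicValNat p (r (Fin.last n)) - padicValNat p (r j)) * γ j : ℕ) :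
          ZMod (p ^ padicValNat p (r (Fin.last n)))) := by
    intro γ
    rw [Nat.cast_sum]
    refine Finset.sum_congr rfl fun j _ => ?_
    have hM : ((p ^ padicValNat p (r j) : ℕ) : ZMod (p ^ padicValNat p (r (Fin.last n)))) *
        ((p ^ (padicValNat p (r (Fin.last n)) - padicValNat p (r j)) * γ j : ℕ) :
          ZMod (p ^ padicValNat p (r (Fin.last n)))) = 0 := by
      rw [← Nat.cast_mul, ← mul_assoc, ← pow_add, Nat.add_sub_cancel' (haj j), Nat.cast_mul,
        ZMod.natCast_self, zero_mul]
    have h1 : ((p ^ (padicValNat p (r (Fin.last n)) - padicValNat p (r j)) * ω j * γ j : ℕ) :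
        ZMod (p ^ padicValNat p (r (Fin.last n)))) =
        ((ω j : ℕ) : ZMod (p ^ padicValNat p (r (Fin.last n)))) *
        ((p ^ (padicValNat p (r (Fin.last n)) - padicValNat p (r j)) * γ j : ℕ) :
          ZMod (p ^ padicValNat p (r (Fin.last n)))) := by
      push_cast; ring
    rw [h1, cast_mul_eq_of_modEq (hcong j) _ hM, ZMod.natCast_rightInverse (z j)]
  have hωmem : ω ∈ Apset r p β := by
    rw [mem_Apset_iff r β ω]
    exact ⟨hbox, by rw [key β]; exact hz⟩
  have h2 := (mem_Apset_iff r β' ω).1 (hsub hωmem)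
  have h3 := h2.2
  rwa [key β'] at h3

private lemma core {n : ℕ} (p a t : ℕ) (hp : p.Prime) (hta : t ≤ a) (ht1 : 1 ≤ t)
    (X X' : Fin (n+1) → ZMod (p ^ a)) (k : Fin (n+1)) (g : ℕ) (hg : ¬ p ∣ g)
    (hXk : X k = ((p ^ (a - t) * g : ℕ) : ZMod (p ^ a)))
    (hX : ∀ j, ∃ y : ZMod (p ^ a), X j = ((p ^ (a - t) : ℕ) : ZMod (p ^ a)) * y)
    (h : ∀ z : Fin (n+1) → ZMod (p ^ a),
      (∑ j, z j * X j) = 0 ↔ (∑ j, z j * X' j) = 0) :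
    ∃ u : ZMod (p ^ a), IsUnit u ∧ ∀ j, X' j = u * X j := by
  haveI : NeZero (p ^ a) := ⟨(pow_pos hp.pos a).ne'⟩
  have hA : ∀ c : ZMod (p ^ a), c * X k = 0 ↔ c * X' k = 0 := by
    intro c
    have h1 := h (Pi.single k c)
    rwa [sum_single_mul, sum_single_mul] at h1
  have hgcop : Nat.Coprime g (p ^ a) :=
    Nat.Coprime.pow_right _ (Nat.coprime_comm.1 (hp.coprime_iff_not_dvd.2 hg))
  have hgu : IsUnit ((g : ℕ) : ZMod (p ^ a)) := (ZMod.isUnit_iff_coprime g (p ^ a)).2 hgcop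
  have hgu_spec : ((g : ℕ) : ZMod (p ^ a)) = (hgu.unit : ZMod (p ^ a)) := hgu.unit_spec.symm
  have hkill : ((p ^ t : ℕ) : ZMod (p ^ a)) * X k = 0 := by
    rw [hXk, ← Nat.cast_mul, ← mul_assoc, ← pow_add, Nat.add_sub_cancel' hta, Nat.cast_mul,
      ZMod.natCast_self, zero_mul]
  obtain ⟨y', hy'⟩ := exists_pow_mul hp hta (X' k) ((hA _).1 hkill)
  have hsurv : ((p ^ (t-1) : ℕ) : ZMod (p ^ a)) * X k ≠ 0 := by
    rw [hXk, ← Nat.cast_mul, Ne, ZMod.natCast_eq_zero_iff]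
    intro hdvd
    rw [← mul_assoc, ← pow_add, show t - 1 + (a - t) = a - 1 by omega] at hdvd
    have h5 : p ^ (a-1) * p ∣ p ^ (a-1) * g := by
      rw [← pow_succ, show a - 1 + 1 = a from by omega]; exact hdvd
    exact hg ((Nat.mul_dvd_mul_iff_left (pow_pos hp.pos (a-1))).1 h5)
  have hsurv' : ((p ^ (t-1) : ℕ) : ZMod (p ^ a)) * X' k ≠ 0 := fun h0 => hsurv ((hA _).2 h0)
  have hyu : IsUnit y' := by
    by_contra hnu
    have hpdvd : p ∣ y'.val := by
      by_contra hnd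
      exact hnu (by
        rw [← ZMod.natCast_rightInverse y']
        exact (ZMod.isUnit_iff_coprime _ _).2
          (Nat.Coprime.pow_right _ (Nat.coprime_comm.1 (hp.coprime_iff_not_dvd.2 hnd))))
    obtain ⟨w, hw⟩ := hpdvd
    apply hsurv'
    rw [hy']
    conv_lhs => rw [← ZMod.natCast_rightInverse y', hw]
    have e1 : ((p ^ (t-1) : ℕ) : ZMod (p ^ a)) * (((p ^ (a-t) : ℕ) : ZMod (p ^ a)) *
        ((p * w : ℕ) : ZMod (p ^ a))) = ((p ^ a * w : ℕ) : ZMod (p ^ a)) := by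
      rw [← Nat.cast_mul, ← Nat.cast_mul]
      congr 1
      rw [show p^(t-1) * (p^(a-t) * (p * w)) = (p^(t-1) * p^(a-t) * p) * w from by ring,
        ← pow_add, ← pow_succ, show t - 1 + (a - t) + 1 = a from by omega]
    rw [e1, Nat.cast_mul, ZMod.natCast_self, zero_mul]
  set δ : ZMod (p ^ a) := ((hgu.unit⁻¹ : (ZMod (p^a))ˣ) : ZMod (p^a)) with hδ
  have hgδ : ((g : ℕ) : ZMod (p^a)) * δ = 1 := by
    rw [hgu_spec, hδ]; exact_mod_cast hgu.unit.mul_inv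
  refine ⟨y' * δ, hyu.mul hgu.unit⁻¹.isUnit, fun j => ?_⟩
  obtain ⟨y, hy⟩ := hX j
  rcases eq_or_ne j k with rfl | hjk
  · rw [hy', hXk, Nat.cast_mul,
      show y' * δ * (((p ^ (a-t) : ℕ) : ZMod (p^a)) * ((g : ℕ) : ZMod (p^a)))
        = (((p ^ (a-t) : ℕ) : ZMod (p^a)) * y') * (((g : ℕ) : ZMod (p^a)) * δ) from by ring,
      hgδ, mul_one]
  · have claim1 : X j = (y * δ) * X k := by
      rw [hy, hXk, Nat.cast_mul,
        show y * δ * (((p ^ (a-t) : ℕ) : ZMod (p^a)) * ((g : ℕ) : ZMod (p^a)))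
          = (((p ^ (a-t) : ℕ) : ZMod (p^a)) * y) * (((g : ℕ) : ZMod (p^a)) * δ) from by ring,
        hgδ, mul_one]
    have hz0 : ∑ i, ((Pi.single j (1 : ZMod (p^a)) : Fin (n+1) → ZMod (p^a)) i
        + (Pi.single k (-(y*δ)) : Fin (n+1) → ZMod (p^a)) i) * X i = 0 := by
      simp only [add_mul, Finset.sum_add_distrib, sum_single_mul]
      rw [one_mul, claim1]; ring
    have hz1 := (h (fun i => (Pi.single j (1 : ZMod (p^a)) : Fin (n+1) → ZMod (p^a)) i
        + (Pi.single k (-(y*δ)) : Fin (n+1) → ZMod (p^a)) i)).1 hz0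
    simp only [add_mul, Finset.sum_add_distrib, sum_single_mul] at hz1
    rw [one_mul] at hz1
    have hXj' : X' j = (y * δ) * X' k := by linear_combination hz1
    rw [hXj', hy', hy]
    ring

theorem stmt_13 (r : Fin (n+1) → ℕ) (hr : ∀ j, 0 < r j)
    (hchain : ∀ i j : Fin (n+1), i ≤ j → r i ∣ r j)
    (p : ℕ) (hp : p.Prime) (hpr : p ∣ r (Fin.last n))
    (β β' : Fin (n+1) → ℕ) (hβ : β ∈ Rfin' r) (hβ' : β' ∈ Rfin' r) :
    Apset r p β = Apset r p β' ↔
      ∃ m : ℕ, 1 ≤ m ∧ m ≤ p ^ padicValNat p (eOf r β) ∧ Nat.Coprime m p ∧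
        ∀ j, β' j ≡ m * β j [MOD p ^ padicValNat p (r j)] := by
  haveI fp : Fact p.Prime := ⟨hp⟩
  haveI : NeZero (p ^ padicValNat p (r (Fin.last n))) := ⟨(pow_pos hp.pos _).ne'⟩
  have hr0 : ∀ j, r j ≠ 0 := fun j => (hr j).ne'
  have hfac : ∀ m : ℕ, m ≠ 0 → ∀ c : ℕ, (p ^ c ∣ m ↔ c ≤ padicValNat p m) := by
    intro m hm c
    rw [← Nat.factorization_def m hp]
    exact hp.pow_dvd_iff_le_factorization hm
  have haj : ∀ j, padicValNat p (r j) ≤ padicValNat p (r (Fin.last n)) := fun j =>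
    (hfac _ (hr0 _) _).1 (pow_padicValNat_dvd.trans (hchain j (Fin.last n) (Fin.le_last j)))
  have hA1 : 1 ≤ padicValNat p (r (Fin.last n)) :=
    (hfac _ (hr0 _) 1).1 (by simpa using hpr)
  have hq0 : ∀ j, r j / Nat.gcd (r j) (β j) ≠ 0 := fun j =>
    (Nat.div_pos (Nat.le_of_dvd (hr j) (Nat.gcd_dvd_left _ _))
      (Nat.gcd_pos_of_pos_left _ (hr j))).ne'
  have he0 : eOf r β ≠ 0 := by
    rw [eOf, Ne, Finset.lcm_eq_zero_iff]
    rintro ⟨j, -, hj⟩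
    exact hq0 j hj
  have hqd : ∀ j, (r j / Nat.gcd (r j) (β j)) ∣ r (Fin.last n) := fun j =>
    (Nat.div_dvd_of_dvd (Nat.gcd_dvd_left _ _)).trans (hchain j (Fin.last n) (Fin.le_last j))
  have heL : eOf r β ∣ r (Fin.last n) := Finset.lcm_dvd fun j _ => hqd j
  have htA : padicValNat p (eOf r β) ≤ padicValNat p (r (Fin.last n)) :=
    (hfac _ (hr0 _) _).1 (pow_padicValNat_dvd.trans heL)
  have hvq : ∀ j, padicValNat p (r j / Nat.gcd (r j) (β j)) ≤ padicValNat p (eOf r β) :=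
    fun j => (hfac _ he0 _).1
      (pow_padicValNat_dvd.trans (Finset.dvd_lcm (Finset.mem_univ j)))
  have hgsum : ∀ j, padicValNat p (r j / Nat.gcd (r j) (β j))
      + padicValNat p (Nat.gcd (r j) (β j)) = padicValNat p (r j) := by
    intro j
    have hg0 : Nat.gcd (r j) (β j) ≠ 0 := (Nat.gcd_pos_of_pos_left _ (hr j)).ne'
    rw [← padicValNat.mul (hq0 j) hg0, Nat.div_mul_cancel (Nat.gcd_dvd_left _ _)]
  have hdiv : ∀ j, p ^ (padicValNat p (r j) - padicValNat p (eOf r β)) ∣ β j := by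
    intro j
    rcases eq_or_ne (β j) 0 with h0 | h0
    · simp [h0]
    · have h1 := hgsum j
      have h2 : padicValNat p (r j) - padicValNat p (eOf r β)
          ≤ padicValNat p (Nat.gcd (r j) (β j)) := by
        have := hvq j; omega
      exact (pow_dvd_pow p h2).trans (pow_padicValNat_dvd.trans (Nat.gcd_dvd_right _ _))
  have hsup : padicValNat p (eOf r β)
      = Finset.univ.sup fun j => padicValNat p (r j / Nat.gcd (r j) (β j)) := by
    rw [eOf, padicValNat_lcm_sup p hp _ _ fun j _ => hq0 j]
  obtain ⟨k, -, hk⟩ := Finset.exists_mem_eq_sup (Finset.univ : Finset (Fin (n+1)))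
    Finset.univ_nonempty fun j => padicValNat p (r j / Nat.gcd (r j) (β j))
  have hkq : padicValNat p (r k / Nat.gcd (r k) (β k)) = padicValNat p (eOf r β) := by
    rw [hsup, hk]
  constructor
  · intro hAp
    have hiff : ∀ z : Fin (n+1) → ZMod (p ^ padicValNat p (r (Fin.last n))),
        (∑ j, z j * ((p ^ (padicValNat p (r (Fin.last n)) - padicValNat p (r j)) * β j : ℕ) :
          ZMod (p ^ padicValNat p (r (Fin.last n)))) = 0) ↔
        (∑ j, z j * ((p ^ (padicValNat p (r (Fin.last n)) - padicValNat p (r j)) * β' j : ℕ) :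
          ZMod (p ^ padicValNat p (r (Fin.last n)))) = 0) :=
      fun z => ⟨transfer r p hp haj β β' (le_of_eq hAp) z, transfer r p hp haj β' β (le_of_eq hAp.symm) z⟩
    rcases Nat.eq_zero_or_pos (padicValNat p (eOf r β)) with ht0 | ht1
    · refine ⟨1, le_refl 1, Nat.one_le_pow _ _ hp.pos, Nat.coprime_one_left p, fun j => ?_⟩
      have hbj : p ^ padicValNat p (r j) ∣ β j := by
        have := hdiv j; rwa [ht0, Nat.sub_zero] at this
      have hXj0 : ((p ^ (padicValNat p (r (Fin.last n)) - padicValNat p (r j)) * β j : ℕ) :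
          ZMod (p ^ padicValNat p (r (Fin.last n)))) = 0 := by
        rw [ZMod.natCast_eq_zero_iff]
        obtain ⟨c, hc⟩ := hbj
        rw [hc, ← mul_assoc, ← pow_add, Nat.sub_add_cancel (haj j)]
        exact Dvd.intro c rfl
      have h1 : ∑ i, (Pi.single j (1 : ZMod (p ^ padicValNat p (r (Fin.last n)))) :
          Fin (n+1) → ZMod (p ^ padicValNat p (r (Fin.last n)))) i *
          ((p ^ (padicValNat p (r (Fin.last n)) - padicValNat p (r i)) * β i : ℕ) :
            ZMod (p ^ padicValNat p (r (Fin.last n)))) = 0 := by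
        rw [sum_single_mul, hXj0, mul_zero]
      have h2 := (hiff _).1 h1
      rw [sum_single_mul, one_mul, ZMod.natCast_eq_zero_iff] at h2
      have hbj' : p ^ padicValNat p (r j) ∣ β' j := by
        have h3 : p ^ (padicValNat p (r (Fin.last n)) - padicValNat p (r j))
            * p ^ padicValNat p (r j)
            ∣ p ^ (padicValNat p (r (Fin.last n)) - padicValNat p (r j)) * β' j := by
          rw [← pow_add, Nat.sub_add_cancel (haj j)]; exact h2
        exact (Nat.mul_dvd_mul_iff_left (pow_pos hp.pos _)).1 h3
      have e1 : β' j ≡ 0 [MOD p ^ padicValNat p (r j)] := Nat.modEq_zero_iff_dvd.2 hbj'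
      have e2 : 1 * β j ≡ 0 [MOD p ^ padicValNat p (r j)] :=
        Nat.modEq_zero_iff_dvd.2 (by rw [one_mul]; exact hbj)
      exact e1.trans e2.symm
    · -- t ≥ 1
      have hβk0 : β k ≠ 0 := by
        intro h0
        have hqk1 : r k / Nat.gcd (r k) (β k) = 1 := by
          rw [h0, Nat.gcd_zero_right, Nat.div_self (hr k)]
        rw [hqk1, padicValNat.one] at hkq
        omega
      have hgk : padicValNat p (Nat.gcd (r k) (β k))
          = min (padicValNat p (r k)) (padicValNat p (β k)) := by
        have h4 := congrArg (fun f => f p) (Nat.factorization_gcd (hr0 k) hβk0)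
        simp only [Finsupp.inf_apply] at h4
        rw [Nat.factorization_def _ hp, Nat.factorization_def _ hp,
          Nat.factorization_def _ hp] at h4
        exact h4
      have hsumk := hgsum k
      rw [hkq, hgk] at hsumk
      have hvβk : padicValNat p (β k) = padicValNat p (r k) - padicValNat p (eOf r β)
          ∧ padicValNat p (eOf r β) ≤ padicValNat p (r k) := by omega
      have hβkfac : β k = p ^ (padicValNat p (r k) - padicValNat p (eOf r β))
          * (β k / p ^ (padicValNat p (r k) - padicValNat p (eOf r β))) := by
        rw [← hvβk.1]
        exact (Nat.mul_div_cancel' pow_padicValNat_dvd).symm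
      have hgp : ¬ p ∣ β k / p ^ (padicValNat p (r k) - padicValNat p (eOf r β)) := by
        rw [← hvβk.1, ← Nat.factorization_def _ hp]
        exact Nat.not_dvd_ordCompl hp hβk0
      have hXk : ((p ^ (padicValNat p (r (Fin.last n)) - padicValNat p (r k)) * β k : ℕ) :
          ZMod (p ^ padicValNat p (r (Fin.last n)))) =
          ((p ^ (padicValNat p (r (Fin.last n)) - padicValNat p (eOf r β))
            * (β k / p ^ (padicValNat p (r k) - padicValNat p (eOf r β))) : ℕ) :
            ZMod (p ^ padicValNat p (r (Fin.last n)))) := by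
        conv_lhs => rw [hβkfac]
        rw [← mul_assoc, ← pow_add]
        congr 3
        have h5 := haj k
        have h6 := hvβk.2
        omega
      have hXfact : ∀ j, ∃ y : ZMod (p ^ padicValNat p (r (Fin.last n))),
          ((p ^ (padicValNat p (r (Fin.last n)) - padicValNat p (r j)) * β j : ℕ) :
            ZMod (p ^ padicValNat p (r (Fin.last n)))) =
          ((p ^ (padicValNat p (r (Fin.last n)) - padicValNat p (eOf r β)) : ℕ) :
            ZMod (p ^ padicValNat p (r (Fin.last n)))) * y := by
        intro j
        obtain ⟨b, hb⟩ := hdiv j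
        refine ⟨((p ^ ((padicValNat p (r (Fin.last n)) - padicValNat p (r j))
          + (padicValNat p (r j) - padicValNat p (eOf r β))
          - (padicValNat p (r (Fin.last n)) - padicValNat p (eOf r β))) * b : ℕ) :
            ZMod (p ^ padicValNat p (r (Fin.last n)))), ?_⟩
        rw [hb, ← Nat.cast_mul]
        congr 1
        rw [← mul_assoc, ← mul_assoc, ← pow_add, ← pow_add]
        congr 2
        have h5 := haj j
        have h6 := htA
        omega
      obtain ⟨u, hu, huX⟩ := core p (padicValNat p (r (Fin.last n))) (padicValNat p (eOf r β))
        hp htA ht1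
        (fun j => ((p ^ (padicValNat p (r (Fin.last n)) - padicValNat p (r j)) * β j : ℕ) :
          ZMod (p ^ padicValNat p (r (Fin.last n)))))
        (fun j => ((p ^ (padicValNat p (r (Fin.last n)) - padicValNat p (r j)) * β' j : ℕ) :
          ZMod (p ^ padicValNat p (r (Fin.last n)))))
        k _ hgp hXk hXfact hiff
      have hucast : ((u.val : ℕ) : ZMod (p ^ padicValNat p (r (Fin.last n)))) = u :=
        ZMod.natCast_rightInverse u
      have hUp : ¬ p ∣ u.val := by
        intro hdvd
        have h7 : ¬ IsUnit ((u.val : ℕ) : ZMod (p ^ padicValNat p (r (Fin.last n)))) := by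
          rw [ZMod.isUnit_iff_coprime]
          intro hc
          have h8 : p ∣ Nat.gcd u.val (p ^ padicValNat p (r (Fin.last n))) :=
            Nat.dvd_gcd hdvd (dvd_pow_self p (by omega))
          rw [hc] at h8
          exact hp.one_lt.ne' (Nat.eq_one_of_dvd_one h8)
        rw [hucast] at h7
        exact h7 hu
      have hmodU : ∀ j, β' j ≡ u.val * β j [MOD p ^ padicValNat p (r j)] := by
        intro j
        have h8 := huX j
        rw [← hucast, ← Nat.cast_mul, ZMod.natCast_eq_natCast_iff] at h8
        obtain ⟨U, hU⟩ : ∃ U, u.val = U := ⟨u.val, rfl⟩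
        rw [hU] at h8 ⊢
        have h9 : β' j * p ^ (padicValNat p (r (Fin.last n)) - padicValNat p (r j))
            ≡ (U * β j) * p ^ (padicValNat p (r (Fin.last n)) - padicValNat p (r j))
            [MOD p ^ padicValNat p (r j)
              * p ^ (padicValNat p (r (Fin.last n)) - padicValNat p (r j))] := by
          have e3 : p ^ (padicValNat p (r (Fin.last n)) - padicValNat p (r j)) * β' j
              = β' j * p ^ (padicValNat p (r (Fin.last n)) - padicValNat p (r j)) :=
            mul_comm _ _
          have e4 : U * (p ^ (padicValNat p (r (Fin.last n)) - padicValNat p (r j)) * β j)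
              = (U * β j) * p ^ (padicValNat p (r (Fin.last n)) - padicValNat p (r j)) := by
            ring
          have e5 : (p : ℕ) ^ padicValNat p (r (Fin.last n)) = p ^ padicValNat p (r j)
              * p ^ (padicValNat p (r (Fin.last n)) - padicValNat p (r j)) := by
            rw [← pow_add]
            congr 1
            have := haj j; omega
          rw [e3, e4, e5] at h8
          exact h8
        exact Nat.ModEq.mul_right_cancel' (pow_pos hp.pos _).ne' h9
      refine ⟨u.val % p ^ padicValNat p (eOf r β), ?_, ?_, ?_, ?_⟩
      · rcases Nat.eq_zero_or_pos (u.val % p ^ padicValNat p (eOf r β)) with h0 | h0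
        · exact absurd ((dvd_pow_self p ht1.ne').trans (Nat.dvd_of_mod_eq_zero h0)) hUp
        · exact h0
      · exact le_of_lt (Nat.mod_lt _ (pow_pos hp.pos _))
      · have hnd : ¬ p ∣ u.val % p ^ padicValNat p (eOf r β) := by
          intro hdvd
          apply hUp
          have h10 := Nat.div_add_mod u.val (p ^ padicValNat p (eOf r β))
          have h11 : p ∣ p ^ padicValNat p (eOf r β) * (u.val / p ^ padicValNat p (eOf r β)) :=
            ((dvd_pow_self p ht1.ne').trans (dvd_mul_right _ _))
          rw [← h10]
          exact Nat.dvd_add h11 hdvd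
        exact Nat.coprime_comm.1 (hp.coprime_iff_not_dvd.2 hnd)
      · intro j
        refine (hmodU j).trans ?_
        obtain ⟨b, hb⟩ := hdiv j
        have hUm : (u.val % p ^ padicValNat p (eOf r β)) ≡ u.val
            [MOD p ^ padicValNat p (eOf r β)] := Nat.mod_modEq _ _
        have h10 : p ^ (padicValNat p (r j) - padicValNat p (eOf r β)) * u.val
            ≡ p ^ (padicValNat p (r j) - padicValNat p (eOf r β))
              * (u.val % p ^ padicValNat p (eOf r β))
            [MOD p ^ (padicValNat p (r j) - padicValNat p (eOf r β))
              * p ^ padicValNat p (eOf r β)] :=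
          Nat.ModEq.mul_left' _ hUm.symm
        have h11 : (p : ℕ) ^ padicValNat p (r j)
            ∣ p ^ (padicValNat p (r j) - padicValNat p (eOf r β))
              * p ^ padicValNat p (eOf r β) := by
          rw [← pow_add]
          exact pow_dvd_pow p (by omega)
        have h12 := (h10.of_dvd h11).mul_right b
        have e6 : u.val * β j = p ^ (padicValNat p (r j) - padicValNat p (eOf r β)) * u.val * b :=
          by rw [hb]; ring
        have e7 : (u.val % p ^ padicValNat p (eOf r β)) * β j
            = p ^ (padicValNat p (r j) - padicValNat p (eOf r β))
              * (u.val % p ^ padicValNat p (eOf r β)) * b := by rw [hb]; ring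
        rw [e6, e7]
        exact h12
  · rintro ⟨m, hm1, hmle, hmcop, hmod⟩
    ext ω
    rw [mem_Apset_iff r β ω, mem_Apset_iff r β' ω]
    refine and_congr_right fun hbox => ?_
    have hmu : IsUnit ((m : ℕ) : ZMod (p ^ padicValNat p (r (Fin.last n)))) :=
      (ZMod.isUnit_iff_coprime m _).2 (hmcop.pow_right _)
    have key : ((∑ j, p ^ (padicValNat p (r (Fin.last n)) - padicValNat p (r j)) * ω j * β' j : ℕ) :
        ZMod (p ^ padicValNat p (r (Fin.last n)))) =
        ((m : ℕ) : ZMod (p ^ padicValNat p (r (Fin.last n)))) *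
        ((∑ j, p ^ (padicValNat p (r (Fin.last n)) - padicValNat p (r j)) * ω j * β j : ℕ) :
          ZMod (p ^ padicValNat p (r (Fin.last n)))) := by
      rw [Nat.cast_sum, Nat.cast_sum, Finset.mul_sum]
      refine Finset.sum_congr rfl fun j _ => ?_
      have h13 : p ^ (padicValNat p (r (Fin.last n)) - padicValNat p (r j)) * ω j * β' j
          ≡ p ^ (padicValNat p (r (Fin.last n)) - padicValNat p (r j)) * ω j * (m * β j)
          [MOD p ^ padicValNat p (r (Fin.last n))] := by
        have h14 := (hmod j).mul_left'
          (p ^ (padicValNat p (r (Fin.last n)) - padicValNat p (r j)) * ω j)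
        refine Nat.ModEq.of_dvd ?_ h14
        rw [show p ^ (padicValNat p (r (Fin.last n)) - padicValNat p (r j)) * ω j
            * p ^ padicValNat p (r j)
            = p ^ padicValNat p (r (Fin.last n)) * ω j from by
          rw [mul_right_comm, ← pow_add, Nat.sub_add_cancel (haj j)]]
        exact dvd_mul_right _ _
      have h15 := (ZMod.natCast_eq_natCast_iff _ _ _).2 h13
      rw [h15]
      push_cast
      ring
    rw [key]
    constructor
    · intro h; rw [h, mul_zero]
    · intro h; exact (IsUnit.mul_right_eq_zero hmu).1 h
end

section
/- Let β, β' ∈ R'. Then β ∼ β' if and only if there exists an integer m with 1 ≤ m ≤ e(β) and gcd(m, e(β)) = 1 such that β'_j ≡ m·β_j (mod r_j) for all 1 ≤ j ≤ n. -/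
open Finset

section Aux

variable {n : ℕ}

/-- character sum over integer vectors, valued in `ZMod M`. -/
def chi (M : ℕ) (a β : Fin (n+1) → ℕ) (x : Fin (n+1) → ℤ) : ZMod M :=
  ∑ j, ((a j * β j : ℕ) : ZMod M) * ((x j : ℤ) : ZMod M)

lemma chi_eq (M : ℕ) (a β : Fin (n+1) → ℕ) (x : Fin (n+1) → ℤ) :
    chi M a β x = (((∑ j, (a j : ℤ) * (β j : ℤ) * x j) : ℤ) : ZMod M) := by
  unfold chi
  push_cast
  exact Finset.sum_congr rfl fun j _ => by ring

lemma chi_smul (M : ℕ) (a β : Fin (n+1) → ℕ) (k : ℤ) (x : Fin (n+1) → ℤ) :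
    chi M a β (fun j => k * x j) = (k : ZMod M) * chi M a β x := by
  rw [chi_eq, chi_eq, ← Int.cast_mul, Finset.mul_sum]
  congr 1
  exact Finset.sum_congr rfl fun j _ => by ring

lemma chi_sub (M : ℕ) (a β : Fin (n+1) → ℕ) (x y : Fin (n+1) → ℤ) :
    chi M a β (x - y) = chi M a β x - chi M a β y := by
  rw [chi_eq, chi_eq, chi_eq, ← Int.cast_sub, ← Finset.sum_sub_distrib]
  congr 1
  exact Finset.sum_congr rfl fun j _ => by simp [Pi.sub_apply]; ring

lemma chi_congr (M : ℕ) (r a β : Fin (n+1) → ℕ) (ha : ∀ j, a j * r j = M)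
    {x y : Fin (n+1) → ℤ} (h : ∀ j, (r j : ℤ) ∣ x j - y j) :
    chi M a β x = chi M a β y := by
  have h0 : chi M a β (x - y) = 0 := by
    rw [chi_eq, ZMod.intCast_zmod_eq_zero_iff_dvd]
    refine Finset.dvd_sum fun j _ => ?_
    obtain ⟨t, ht⟩ := h j
    have : (a j : ℤ) * (β j : ℤ) * (x - y) j = (M : ℤ) * (β j * t) := by
      have hm : ((a j : ℤ) * r j) = M := by exact_mod_cast congrArg Nat.cast (ha j)
      simp only [Pi.sub_apply]
      rw [ht, ← hm]; ring
    rw [this]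
    exact Dvd.intro _ rfl
  have := chi_sub M a β x y
  rw [h0] at this
  exact (sub_eq_zero.mp this.symm)
open Finset

lemma exists_gcd_eq_sum {ι : Type*} [DecidableEq ι] (s : Finset ι) (c : ι → ℕ) :
    ∃ x : ι → ℤ, ((s.gcd c : ℕ) : ℤ) = ∑ j ∈ s, (c j : ℤ) * x j := by
  induction s using Finset.induction_on with
  | empty => exact ⟨0, by simp⟩
  | @insert a s ha ih =>
    obtain ⟨x, hx⟩ := ih
    have hg : (insert a s).gcd c = Nat.gcd (c a) (s.gcd c) := by
      rw [Finset.gcd_insert]; rfl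
    set A := Nat.gcdA (c a) (s.gcd c)
    set B := Nat.gcdB (c a) (s.gcd c)
    refine ⟨fun j => if j = a then A else B * x j, ?_⟩
    rw [hg, Nat.gcd_eq_gcd_ab, Finset.sum_insert ha]
    have h1 : ∀ j ∈ s, (c j : ℤ) * (if j = a then A else B * x j) = B * ((c j : ℤ) * x j) :=
      fun j hj => by rw [if_neg (by rintro rfl; exact ha hj)]; ring
    rw [Finset.sum_congr rfl h1, ← Finset.mul_sum, ← hx]
    simp
    ring

lemma chi_eq_mul (M : ℕ) (a β : Fin (n+1) → ℕ) (d : ℕ) (hd : ∀ j, d ∣ a j * β j)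
    (x : Fin (n+1) → ℤ) :
    ∃ k : ℤ, chi M a β x = (k : ZMod M) * ((d : ℕ) : ZMod M) := by
  refine ⟨∑ j, ((a j * β j / d : ℕ) : ℤ) * x j, ?_⟩
  rw [chi_eq]
  rw [show ((((∑ j, ((a j * β j / d : ℕ) : ℤ) * x j)) : ℤ) : ZMod M) * ((d:ℕ) : ZMod M)
      = (((∑ j, ((a j * β j / d : ℕ) : ℤ) * x j) * d : ℤ) : ZMod M) by push_cast; ring]
  congr 1
  rw [Finset.sum_mul]
  refine Finset.sum_congr rfl fun j _ => ?_
  have : (a j * β j : ℕ) = d * (a j * β j / d) := (Nat.mul_div_cancel' (hd j)).symm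
  have h2 : ((a j : ℤ) * β j) = (d : ℤ) * ((a j * β j / d : ℕ) : ℤ) := by exact_mod_cast congrArg Nat.cast this
  rw [h2]; ring

lemma chi_delta (M : ℕ) (a β : Fin (n+1) → ℕ) (j : Fin (n+1)) :
    chi M a β (fun i => if i = j then (1:ℤ) else 0) = ((a j * β j : ℕ) : ZMod M) := by
  unfold chi
  rw [Finset.sum_eq_single j]
  · simp
  · intro b _ hb; simp [hb]
  · intro h; exact absurd (Finset.mem_univ j) h

lemma exists_chi_eq_gcd (M : ℕ) (a β : Fin (n+1) → ℕ) :
    ∃ x₀ : Fin (n+1) → ℤ,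
      chi M a β x₀ = ((Nat.gcd M (Finset.univ.gcd fun j => a j * β j) : ℕ) : ZMod M) := by
  obtain ⟨x, hx⟩ := exists_gcd_eq_sum Finset.univ (fun j => a j * β j)
  set G := Finset.univ.gcd fun j => a j * β j with hG
  set B := Nat.gcdB M G
  refine ⟨fun j => B * x j, ?_⟩
  rw [chi_eq]
  have h1 : (∑ j, (a j : ℤ) * (β j) * (B * x j)) = B * ∑ j, ((a j * β j : ℕ) : ℤ) * x j := by
    rw [Finset.mul_sum]; refine Finset.sum_congr rfl fun j _ => by push_cast; ring
  rw [h1, ← hx]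
  have h2 : ((Nat.gcd M G : ℕ) : ℤ) = M * Nat.gcdA M G + G * B := Nat.gcd_eq_gcd_ab M G
  have : ((B * (G:ℤ) : ℤ) : ZMod M) = (((Nat.gcd M G : ℕ) : ℤ) : ZMod M) := by
    rw [h2]
    push_cast
    rw [ZMod.natCast_self]
    ring
  rw [this]; push_cast; ring

lemma eOf_mul_gcd (M : ℕ) (hM : 0 < M) (r a β : Fin (n+1) → ℕ) (hr : ∀ j, 0 < r j)
    (ha : ∀ j, a j * r j = M) :
    eOf r β * Nat.gcd M (Finset.univ.gcd fun j => a j * β j) = M := by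
  set G := Finset.univ.gcd fun j => a j * β j with hG
  set d := Nat.gcd M G with hd
  set e := eOf r β with he
  have haj : ∀ j, 0 < a j := by
    intro j
    rcases Nat.eq_zero_or_pos (a j) with h | h
    · exfalso; have := ha j; rw [h, Nat.zero_mul] at this; omega
    · exact h
  have hdpos : 0 < d := Nat.gcd_pos_of_pos_left _ hM
  have hh : ∀ j, Nat.gcd M (a j * β j) = a j * Nat.gcd (r j) (β j) := by
    intro j; rw [← ha j, Nat.gcd_mul_left]
  have hdh : ∀ j, d ∣ a j * Nat.gcd (r j) (β j) := by
    intro j; rw [← hh j]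
    exact Nat.dvd_gcd (Nat.gcd_dvd_left M G)
      ((Nat.gcd_dvd_right M G).trans (Finset.gcd_dvd (Finset.mem_univ j)))
  have hhM : ∀ j, a j * Nat.gcd (r j) (β j) ∣ M := by
    intro j; rw [← hh j]; exact Nat.gcd_dvd_left _ _
  have hdM : d ∣ M := Nat.gcd_dvd_left _ _
  have hLj : ∀ j, r j / Nat.gcd (r j) (β j) = M / (a j * Nat.gcd (r j) (β j)) := by
    intro j; rw [← ha j, Nat.mul_div_mul_left _ _ (haj j)]
  have hhpos : ∀ j, 0 < a j * Nat.gcd (r j) (β j) := by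
    intro j
    exact Nat.mul_pos (haj j) (Nat.gcd_pos_of_pos_left _ (hr j))
  -- e divides M / d
  have hdvd1 : e ∣ M / d := by
    refine Finset.lcm_dvd fun j _ => ?_
    rw [hLj j]
    obtain ⟨k, hk⟩ := hdh j
    obtain ⟨s, hs⟩ := hhM j
    have h1 : M / (a j * Nat.gcd (r j) (β j)) = s := by
      rw [hs, Nat.mul_div_cancel_left _ (hhpos j)]
    have h2 : M / d = k * s := by
      rw [hs, hk, Nat.mul_assoc, Nat.mul_div_cancel_left _ hdpos]
    exact ⟨k, by rw [h1, h2]; ring⟩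
  have hMde : M ∣ d * e := by
    have h1 : d * e = Nat.gcd (M * e) (G * e) := (Nat.gcd_mul_right M e G).symm
    rw [h1]
    refine Nat.dvd_gcd ⟨e, rfl⟩ ?_
    have h2 : G * e = Finset.univ.gcd fun j => (a j * β j) * e := by
      rw [Finset.gcd_mul_right, normalize_eq]
    rw [h2]
    refine Finset.dvd_gcd fun j _ => ?_
    obtain ⟨t, ht⟩ := Finset.dvd_lcm (f := fun j => r j / Nat.gcd (r j) (β j)) (Finset.mem_univ j)
    obtain ⟨w, hw⟩ : (a j * Nat.gcd (r j) (β j)) ∣ a j * β j :=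
      Nat.mul_dvd_mul_left _ (Nat.gcd_dvd_right _ _)
    obtain ⟨s, hs⟩ := hhM j
    have hMh : M / (a j * Nat.gcd (r j) (β j)) = s := by
      rw [hs, Nat.mul_div_cancel_left _ (hhpos j)]
    refine ⟨w * t, ?_⟩
    have ht' : e = r j / Nat.gcd (r j) (β j) * t := ht
    rw [ht', hLj j, hMh, hw, hs]
    ring
  have hdvd2 : M / d ∣ e := by
    obtain ⟨t, ht⟩ := hMde
    refine ⟨t, ?_⟩
    have h3 : d * e = d * (M / d * t) := by
      rw [ht, ← Nat.mul_assoc, Nat.mul_div_cancel' hdM]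
    exact Nat.eq_of_mul_eq_mul_left hdpos h3
  have hef : e = M / d := Nat.dvd_antisymm hdvd1 hdvd2
  rw [hef, Nat.div_mul_cancel hdM]

lemma edvd (M : ℕ) (hM : 0 < M) (r a β β' : Fin (n+1) → ℕ) (hr : ∀ j, 0 < r j)
    (ha : ∀ j, a j * r j = M)
    (H : ∀ x, chi M a β x = 0 → chi M a β' x = 0) :
    eOf r β' ∣ eOf r β := by
  set G := Finset.univ.gcd fun j => a j * β j with hG
  set d := Nat.gcd M G with hd
  set G' := Finset.univ.gcd fun j => a j * β' j with hG'
  set d' := Nat.gcd M G' with hd'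
  set e := eOf r β with he
  set e' := eOf r β' with he'
  have hed : e * d = M := eOf_mul_gcd M hM r a β hr ha
  have he'd' : e' * d' = M := eOf_mul_gcd M hM r a β' hr ha
  have hd'pos : 0 < d' := Nat.gcd_pos_of_pos_left _ hM
  have h1 : ∀ j, M ∣ e * (a j * β' j) := by
    intro j
    have hdab : d ∣ a j * β j :=
      (Nat.gcd_dvd_right M G).trans (Finset.gcd_dvd (Finset.mem_univ j))
    have hx : chi M a β (fun i => (e : ℤ) * (if i = j then (1:ℤ) else 0)) = 0 := by
      rw [chi_smul, chi_delta]
      obtain ⟨k, hk⟩ := hdab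
      rw [hk]
      rw [show (((d * k : ℕ) : ZMod M)) = ((d * k : ℕ) : ZMod M) from rfl]
      have : ((e : ℕ) : ZMod M) * ((d * k : ℕ) : ZMod M) = ((M * k : ℕ) : ZMod M) := by
        push_cast
        rw [show ((M : ℕ) : ZMod M) = ((e * d : ℕ) : ZMod M) by rw [hed]]
        push_cast
        ring
      rw [show ((e : ℤ) : ZMod M) = ((e : ℕ) : ZMod M) by push_cast; ring, this]
      simp [ZMod.natCast_eq_zero_iff]
    have hx' := H _ hx
    rw [chi_smul, chi_delta] at hx'
    have : ((e * (a j * β' j) : ℕ) : ZMod M) = 0 := by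
      push_cast at hx' ⊢
      exact_mod_cast hx'
    exact (ZMod.natCast_eq_zero_iff _ _).mp this
  have h2 : M ∣ d' * e := by
    have hh : d' * e = Nat.gcd (M * e) (G' * e) := (Nat.gcd_mul_right M e G').symm
    rw [hh]
    refine Nat.dvd_gcd ⟨e, rfl⟩ ?_
    rw [show G' * e = Finset.univ.gcd fun j => (a j * β' j) * e by
      rw [Finset.gcd_mul_right, normalize_eq]]
    exact Finset.dvd_gcd fun j _ => by rw [Nat.mul_comm]; exact h1 j
  -- e' * d' = M ∣ d' * e = e * d' ⇒ e' ∣ e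
  obtain ⟨t, ht⟩ := h2
  refine ⟨t, ?_⟩
  have h3 : e * d' = (e' * t) * d' := by
    calc e * d' = d' * e := Nat.mul_comm _ _
    _ = M * t := ht
    _ = e' * d' * t := by rw [he'd']
    _ = e' * t * d' := by ring
  exact Nat.eq_of_mul_eq_mul_right hd'pos h3

lemma key (M : ℕ) (hM : 0 < M) (r a β β' : Fin (n+1) → ℕ) (hr : ∀ j, 0 < r j)
    (ha : ∀ j, a j * r j = M)
    (H : ∀ x, chi M a β x = 0 ↔ chi M a β' x = 0) :
    ∃ m : ℕ, 1 ≤ m ∧ m ≤ eOf r β ∧ Nat.Coprime m (eOf r β) ∧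
      ∀ j, (r j : ℤ) ∣ (m : ℤ) * (β j : ℤ) - (β' j : ℤ) := by
  haveI : NeZero M := ⟨hM.ne'⟩
  have haj : ∀ j, 0 < a j := by
    intro j
    rcases Nat.eq_zero_or_pos (a j) with h | h
    · exfalso; have := ha j; rw [h, Nat.zero_mul] at this; omega
    · exact h
  set G := Finset.univ.gcd fun j => a j * β j with hG
  set d := Nat.gcd M G with hd
  set G' := Finset.univ.gcd fun j => a j * β' j with hG'
  set d' := Nat.gcd M G' with hd'
  set e := eOf r β with he
  set e' := eOf r β' with he'
  have hed : e * d = M := eOf_mul_gcd M hM r a β hr ha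
  have he'd' : e' * d' = M := eOf_mul_gcd M hM r a β' hr ha
  have hdpos : 0 < d := Nat.gcd_pos_of_pos_left _ hM
  have hepos : 0 < e := by
    rcases Nat.eq_zero_or_pos e with h | h
    · exfalso; rw [h, Nat.zero_mul] at hed; omega
    · exact h
  have hdM : d ∣ M := Nat.gcd_dvd_left _ _
  have hee' : e = e' :=
    Nat.dvd_antisymm (edvd M hM r a β' β hr ha fun x => (H x).mpr)
      (edvd M hM r a β β' hr ha fun x => (H x).mp)
  have hdd : d = d' := by
    have h0 : e * d = e * d' := by rw [hed, hee', he'd']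
    exact Nat.eq_of_mul_eq_mul_left hepos h0
  have hdab : ∀ j, d ∣ a j * β j := fun j =>
    (Nat.gcd_dvd_right M G).trans (Finset.gcd_dvd (Finset.mem_univ j))
  have hd'ab : ∀ j, d' ∣ a j * β' j := fun j =>
    (Nat.gcd_dvd_right M G').trans (Finset.gcd_dvd (Finset.mem_univ j))
  obtain ⟨x₀, hx₀⟩ := exists_chi_eq_gcd M a β
  set c : ℕ := (chi M a β' x₀).val with hc
  have hcv : ((c : ℕ) : ZMod M) = chi M a β' x₀ := ZMod.natCast_rightInverse _
  have trans : ∀ x y, chi M a β x = chi M a β y → chi M a β' x = chi M a β' y := by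
    intro x y hxy
    have h0 : chi M a β (x - y) = 0 := by rw [chi_sub, hxy, sub_self]
    have h1 := (H _).mp h0
    rw [chi_sub] at h1
    exact sub_eq_zero.mp h1
  have hstep : ∀ j, (M : ℤ) ∣ (((a j * β j / d) * c : ℕ) : ℤ) - ((a j * β' j : ℕ) : ℤ) := by
    intro j
    set k : ℕ := a j * β j / d with hk
    have hdk : a j * β j = d * k := (Nat.mul_div_cancel' (hdab j)).symm
    have h1 : chi M a β (fun i => (k : ℤ) * x₀ i) = chi M a β (fun i => if i = j then (1:ℤ) else 0) := by
      rw [chi_smul, hx₀, chi_delta, hdk]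
      push_cast; ring
    have h2 := trans _ _ h1.symm
    rw [chi_delta, chi_smul, ← hcv] at h2
    have h3 : ((a j * β' j : ℕ) : ZMod M) = ((k * c : ℕ) : ZMod M) := by
      rw [h2]; push_cast; ring
    have h4 : a j * β' j ≡ k * c [MOD M] := (ZMod.natCast_eq_natCast_iff _ _ _).mp h3
    exact h4.dvd
  have hdc : d ∣ c := by
    obtain ⟨k₀, hk₀⟩ := chi_eq_mul M a β' d' hd'ab x₀
    rw [← hcv] at hk₀
    have h5 : ((c : ℤ) : ZMod M) = ((k₀ * (d' : ℕ) : ℤ) : ZMod M) := by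
      push_cast
      exact hk₀
    have h6 := (ZMod.intCast_eq_intCast_iff_dvd_sub _ _ _).mp h5
    have hd'M : (d' : ℤ) ∣ (M : ℤ) := Int.natCast_dvd_natCast.mpr (hdd ▸ hdM)
    obtain ⟨t, ht⟩ := h6
    have h7 : (c : ℤ) = k₀ * d' - M * t := by rw [← ht]; ring
    have h8 : (d' : ℤ) ∣ (c : ℤ) := by
      rw [h7]
      exact dvd_sub (Dvd.intro_left k₀ rfl) (hd'M.mul_right t)
    rw [hdd]
    exact_mod_cast h8
  have hgcd_le : Nat.gcd c M ∣ d := by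
    rw [hdd, hd']
    refine Nat.dvd_gcd (Nat.gcd_dvd_right c M) ?_
    refine Finset.dvd_gcd fun j _ => ?_
    have h9 := hstep j
    obtain ⟨t, ht⟩ := h9
    have h10 : ((a j * β' j : ℕ) : ℤ) = ((a j * β j / d) * c : ℕ) - M * t := by
      rw [← ht]; ring
    have h11 : ((Nat.gcd c M : ℕ) : ℤ) ∣ ((a j * β' j : ℕ) : ℤ) := by
      rw [h10]
      refine dvd_sub ?_ ?_
      · have : (c : ℤ) ∣ (((a j * β j / d) * c : ℕ) : ℤ) := by
          push_cast; exact Dvd.intro_left _ rfl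
        exact (Int.natCast_dvd_natCast.mpr (Nat.gcd_dvd_left c M)).trans this
      · exact (Int.natCast_dvd_natCast.mpr (Nat.gcd_dvd_right c M)).mul_right t
    exact_mod_cast h11
  have hgcdcM : Nat.gcd c M = d := Nat.dvd_antisymm hgcd_le (Nat.dvd_gcd hdc hdM)
  set u := c / d with hu
  have hcu : c = d * u := (Nat.mul_div_cancel' hdc).symm
  have hue : Nat.gcd u e = 1 := by
    have h12 : Nat.gcd c M = d * Nat.gcd u e := by
      rw [hcu, ← hed, Nat.mul_comm e d, Nat.gcd_mul_left]
    rw [hgcdcM] at h12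
    have := Nat.eq_of_mul_eq_mul_left hdpos (by rw [← h12, Nat.mul_one] : d * 1 = d * Nat.gcd u e)
    omega
  have hcong : ∀ j, (r j : ℤ) ∣ (u : ℤ) * (β j : ℤ) - (β' j : ℤ) := by
    intro j
    have h9 := hstep j
    set k : ℕ := a j * β j / d with hk
    have hdk : a j * β j = d * k := (Nat.mul_div_cancel' (hdab j)).symm
    have hnat : k * c = a j * (u * β j) := by
      rw [hcu]
      calc k * (d * u) = (d * k) * u := by ring
      _ = (a j * β j) * u := by rw [← hdk]
      _ = a j * (u * β j) := by ring
    have h10 : ((k * c : ℕ) : ℤ) = (a j : ℤ) * ((u : ℤ) * (β j : ℤ)) := by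
      rw [hnat]; push_cast; ring
    rw [h10] at h9
    have h11 : (a j : ℤ) * ((u : ℤ) * (β j : ℤ) - (β' j : ℤ))
        = (a j : ℤ) * ((u : ℤ) * (β j : ℤ)) - ((a j * β' j : ℕ) : ℤ) := by push_cast; ring
    have h12 : ((a j : ℤ) * (r j : ℤ)) ∣ (a j : ℤ) * ((u : ℤ) * (β j : ℤ) - (β' j : ℤ)) := by
      rw [h11, show (a j : ℤ) * (r j : ℤ) = (M : ℤ) by exact_mod_cast ha j]
      exact h9
    have hane : (a j : ℤ) ≠ 0 := by exact_mod_cast (haj j).ne'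
    exact (mul_dvd_mul_iff_left hane).mp h12
  have hre : ∀ j, (r j : ℕ) ∣ e * β j := by
    intro j
    set g := Nat.gcd (r j) (β j) with hg
    obtain ⟨t, ht⟩ := Finset.dvd_lcm
      (f := fun j => r j / Nat.gcd (r j) (β j)) (Finset.mem_univ j)
    have ht' : e = r j / g * t := ht
    have gpos : 0 < g := Nat.gcd_pos_of_pos_left _ (hr j)
    obtain ⟨bb, hbb⟩ : g ∣ β j := Nat.gcd_dvd_right _ _
    obtain ⟨rr, hrr⟩ : g ∣ r j := Nat.gcd_dvd_left _ _
    have hrg : r j / g = rr := by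
      rw [hrr, Nat.mul_div_cancel_left _ gpos]
    refine ⟨t * bb, ?_⟩
    rw [ht', hrg, hbb, hrr]
    ring
  set m : ℕ := if u % e = 0 then e else u % e with hm
  have heMU : (e : ℤ) ∣ (m : ℤ) - (u : ℤ) := by
    rcases Nat.eq_zero_or_pos (u % e) with h0 | h0
    · have h1 : e ∣ u := Nat.dvd_of_mod_eq_zero h0
      obtain ⟨q, hq⟩ := h1
      have : m = e := by rw [hm, if_pos h0]
      rw [this, hq]
      exact ⟨1 - q, by push_cast; ring⟩
    · have : m = u % e := by rw [hm, if_neg h0.ne']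
      rw [this]
      have h1 : u = e * (u / e) + u % e := (Nat.div_add_mod u e).symm
      refine ⟨-(u / e : ℕ), ?_⟩
      have h2 : (u : ℤ) = e * (u / e : ℕ) + (u % e : ℕ) := by exact_mod_cast h1
      rw [h2]; push_cast; ring
  refine ⟨m, ?_, ?_, ?_, ?_⟩
  · rcases Nat.eq_zero_or_pos (u % e) with h0 | h0
    · rw [hm, if_pos h0]; exact hepos
    · rw [hm, if_neg h0.ne']; exact h0
  · rcases Nat.eq_zero_or_pos (u % e) with h0 | h0
    · rw [hm, if_pos h0]
    · rw [hm, if_neg h0.ne']; exact le_of_lt (Nat.mod_lt _ hepos)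
  · rcases Nat.eq_zero_or_pos (u % e) with h0 | h0
    · have h1 : e ∣ u := Nat.dvd_of_mod_eq_zero h0
      have h2 : e ∣ 1 := by
        rw [← hue]; exact Nat.dvd_gcd h1 dvd_rfl
      have h3 : e = 1 := Nat.dvd_one.mp h2
      rw [hm, if_pos h0, h3]
      exact Nat.coprime_one_left 1
    · rw [hm, if_neg h0.ne']
      have h1 : Nat.gcd (u % e) e = 1 := by
        rw [← Nat.gcd_rec e u, Nat.gcd_comm]; exact hue
      exact h1
  · intro j
    obtain ⟨s, hs⟩ := heMU
    have h1 : (m : ℤ) * β j - β' j = ((u : ℤ) * β j - β' j) + s * ((e * β j : ℕ) : ℤ) := by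
      push_cast
      rw [show (m:ℤ) = u + e * s by linarith [hs]]
      ring
    rw [h1]
    exact dvd_add (hcong j) ((Int.natCast_dvd_natCast.mpr (hre j)).mul_left s)

lemma chi_cong_mul (M : ℕ) (r a β β' : Fin (n+1) → ℕ) (ha : ∀ j, a j * r j = M) (m : ℕ)
    (h : ∀ j, (r j : ℤ) ∣ (m : ℤ) * β j - β' j) (x : Fin (n+1) → ℤ) :
    chi M a β' x = ((m : ℕ) : ZMod M) * chi M a β x := by
  have h1 : chi M a β (fun i => (m : ℤ) * x i) = ((m:ℕ) : ZMod M) * chi M a β x := by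
    rw [chi_smul]; push_cast; ring
  rw [← h1, chi_eq, chi_eq, ZMod.intCast_eq_intCast_iff_dvd_sub]
  rw [← Finset.sum_sub_distrib]
  refine Finset.dvd_sum fun j _ => ?_
  obtain ⟨t, ht⟩ := h j
  have hM' : (a j : ℤ) * (r j : ℤ) = M := by exact_mod_cast ha j
  have : (a j:ℤ) * (β j) * ((m:ℤ) * x j) - (a j:ℤ) * (β' j) * x j = (M:ℤ) * (t * x j) := by
    calc (a j:ℤ) * (β j) * ((m:ℤ) * x j) - (a j:ℤ) * (β' j) * x j
        = (a j:ℤ) * x j * ((m:ℤ) * β j - β' j) := by ring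
    _ = (a j:ℤ) * x j * ((r j:ℤ) * t) := by rw [ht]
    _ = ((a j:ℤ) * (r j:ℤ)) * (t * x j) := by ring
    _ = (M:ℤ) * (t * x j) := by rw [hM']
  rw [this]
  exact Dvd.intro _ rfl

lemma mem_Aset_iff (r : Fin (n+1) → ℕ) (β : Fin (n+1) → ℕ) (ω : Fin (n+1) → ℕ) :
    ω ∈ Aset r β ↔ (∀ j, 1 ≤ ω j ∧ ω j ≤ r j) ∧
      chi (r (Fin.last n)) (fun j => r (Fin.last n) / r j) β (fun j => (ω j : ℤ)) = 0 := by
  unfold Aset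
  rw [Finset.mem_filter, Fintype.mem_piFinset]
  have hch : chi (r (Fin.last n)) (fun j => r (Fin.last n) / r j) β (fun j => (ω j : ℤ))
      = ((∑ j, (r (Fin.last n) / r j) * ω j * β j : ℕ) : ZMod (r (Fin.last n))) := by
    rw [chi_eq]
    have h0 : (∑ j, ((r (Fin.last n) / r j : ℕ) : ℤ) * ((β j : ℕ) : ℤ) * ((ω j : ℕ) : ℤ))
        = ((∑ j, (r (Fin.last n) / r j) * ω j * β j : ℕ) : ℤ) := by
      rw [Nat.cast_sum]
      exact Finset.sum_congr rfl fun j _ => by rw [Nat.cast_mul, Nat.cast_mul]; ring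
    rw [h0, Int.cast_natCast]
  have hcond : (∑ j, (r (Fin.last n) / r j) * ω j * β j) % r (Fin.last n) = 0 ↔
      chi (r (Fin.last n)) (fun j => r (Fin.last n) / r j) β (fun j => (ω j : ℤ)) = 0 := by
    rw [hch, ZMod.natCast_eq_zero_iff, Nat.dvd_iff_mod_eq_zero]
  constructor
  · rintro ⟨h1, h2⟩
    exact ⟨fun j => Finset.mem_Icc.mp (h1 j), hcond.mp h2⟩
  · rintro ⟨h1, h2⟩
    exact ⟨fun j => Finset.mem_Icc.mpr (h1 j), hcond.mpr h2⟩

lemma exists_omega (r : Fin (n+1) → ℕ) (hr : ∀ j, 0 < r j) (x : Fin (n+1) → ℤ) :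
    ∃ ω : Fin (n+1) → ℕ, (∀ j, 1 ≤ ω j ∧ ω j ≤ r j) ∧ ∀ j, (r j : ℤ) ∣ x j - (ω j : ℤ) := by
  refine ⟨fun j => ((x j - 1) % (r j : ℤ) + 1).toNat, fun j => ?_, fun j => ?_⟩
  · have hrj : (0:ℤ) < (r j : ℤ) := by exact_mod_cast hr j
    have h0 : 0 ≤ (x j - 1) % (r j : ℤ) := Int.emod_nonneg _ hrj.ne'
    have h1 : (x j - 1) % (r j : ℤ) < r j := Int.emod_lt_of_pos _ hrj
    have h2 : ((((x j - 1) % (r j:ℤ) + 1).toNat : ℕ) : ℤ) = (x j - 1) % (r j:ℤ) + 1 :=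
      Int.toNat_of_nonneg (by omega)
    constructor
    · have : (1:ℤ) ≤ ((((x j - 1) % (r j:ℤ) + 1).toNat : ℕ) : ℤ) := by omega
      exact_mod_cast this
    · have : ((((x j - 1) % (r j:ℤ) + 1).toNat : ℕ) : ℤ) ≤ (r j : ℤ) := by omega
      exact_mod_cast this
  · have hrj : (0:ℤ) < (r j : ℤ) := by exact_mod_cast hr j
    have h0 : 0 ≤ (x j - 1) % (r j : ℤ) := Int.emod_nonneg _ hrj.ne'
    have h2 : ((((x j - 1) % (r j:ℤ) + 1).toNat : ℕ) : ℤ) = (x j - 1) % (r j:ℤ) + 1 :=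
      Int.toNat_of_nonneg (by omega)
    rw [h2]
    have h3 : x j - ((x j - 1) % (r j:ℤ) + 1) = (r j : ℤ) * ((x j - 1) / (r j:ℤ)) := by
      have := Int.emod_def (x j - 1) (r j : ℤ)
      omega
    rw [h3]
    exact Dvd.intro _ rfl

end Aux

theorem stmt_14 (r : Fin (n+1) → ℕ) (hr : ∀ j, 0 < r j)
    (hchain : ∀ i j : Fin (n+1), i ≤ j → r i ∣ r j)
    (β β' : Fin (n+1) → ℕ) (hβ : β ∈ Rfin' r) (hβ' : β' ∈ Rfin' r) :
    Aset r β = Aset r β' ↔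
      ∃ m : ℕ, 1 ≤ m ∧ m ≤ eOf r β ∧ Nat.Coprime m (eOf r β) ∧
        ∀ j, β' j ≡ m * β j [MOD r j] := by
  classical
  have hM : 0 < r (Fin.last n) := hr (Fin.last n)
  set M := r (Fin.last n) with hMdef
  set a : Fin (n+1) → ℕ := fun j => M / r j with haDef
  have ha : ∀ j, a j * r j = M := fun j => Nat.div_mul_cancel (hchain j (Fin.last n) (Fin.le_last j))
  have hmem : ∀ (γ ω : Fin (n+1) → ℕ), ω ∈ Aset r γ ↔
      (∀ j, 1 ≤ ω j ∧ ω j ≤ r j) ∧ chi M a γ (fun j => (ω j : ℤ)) = 0 :=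
    fun γ ω => mem_Aset_iff r γ ω
  constructor
  · intro hA
    have H : ∀ x, chi M a β x = 0 ↔ chi M a β' x = 0 := by
      intro x
      obtain ⟨ω, hω1, hω2⟩ := exists_omega r hr x
      have e1 : chi M a β x = chi M a β (fun j => (ω j : ℤ)) := chi_congr M r a β ha hω2
      have e2 : chi M a β' x = chi M a β' (fun j => (ω j : ℤ)) := chi_congr M r a β' ha hω2
      rw [e1, e2]
      constructor
      · intro h0
        have hmm : ω ∈ Aset r β := (hmem β ω).mpr ⟨hω1, h0⟩
        rw [hA] at hmm
        exact ((hmem β' ω).mp hmm).2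
      · intro h0
        have hmm : ω ∈ Aset r β' := (hmem β' ω).mpr ⟨hω1, h0⟩
        rw [← hA] at hmm
        exact ((hmem β ω).mp hmm).2
    obtain ⟨m, hm1, hm2, hm3, hm4⟩ := key M hM r a β β' hr ha H
    refine ⟨m, hm1, hm2, hm3, fun j => ?_⟩
    rw [Nat.modEq_iff_dvd]
    have h5 := hm4 j
    have h6 : ((m * β j : ℕ) : ℤ) - ((β' j : ℕ) : ℤ) = (m : ℤ) * (β j : ℤ) - (β' j : ℤ) := by
      push_cast; ring
    rw [h6]
    exact h5
  · rintro ⟨m, hm1, hm2, hm3, hm4⟩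
    have hcong : ∀ j, (r j : ℤ) ∣ (m : ℤ) * (β j : ℤ) - (β' j : ℤ) := by
      intro j
      have h5 := (Nat.modEq_iff_dvd).mp (hm4 j)
      have h6 : ((m * β j : ℕ) : ℤ) - ((β' j : ℕ) : ℤ) = (m : ℤ) * (β j : ℤ) - (β' j : ℤ) := by
        push_cast; ring
      rw [← h6]
      exact h5
    have hmul : ∀ x, chi M a β' x = ((m : ℕ) : ZMod M) * chi M a β x :=
      chi_cong_mul M r a β β' ha m hcong
    set G := Finset.univ.gcd fun j => a j * β j with hG
    set d := Nat.gcd M G with hd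
    have hed : eOf r β * d = M := eOf_mul_gcd M hM r a β hr ha
    have hdab : ∀ j, d ∣ a j * β j := fun j =>
      (Nat.gcd_dvd_right M G).trans (Finset.gcd_dvd (Finset.mem_univ j))
    have H : ∀ x, chi M a β x = 0 ↔ chi M a β' x = 0 := by
      intro x
      constructor
      · intro h; rw [hmul x, h, mul_zero]
      · intro h
        obtain ⟨k, hk⟩ := chi_eq_mul M a β d hdab x
        have hzero : ((eOf r β : ℕ) : ZMod M) * chi M a β x = 0 := by
          rw [hk]
          have : ((eOf r β : ℕ) : ZMod M) * (((k : ℤ) : ZMod M) * ((d:ℕ) : ZMod M))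
              = ((k : ℤ) : ZMod M) * ((eOf r β * d : ℕ) : ZMod M) := by
            push_cast; ring
          rw [this, hed, ZMod.natCast_self, mul_zero]
        have hb := Nat.gcd_eq_gcd_ab m (eOf r β)
        rw [hm3] at hb
        have h1 : (1 : ZMod M) = (((m : ℤ) * Nat.gcdA m (eOf r β)
            + (eOf r β : ℤ) * Nat.gcdB m (eOf r β) : ℤ) : ZMod M) := by
          rw [← hb]; norm_num
        calc chi M a β x = (1 : ZMod M) * chi M a β x := by rw [one_mul]
        _ = (((m : ℤ) : ZMod M) * ((Nat.gcdA m (eOf r β) : ℤ) : ZMod M)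
              + ((eOf r β : ℤ) : ZMod M) * ((Nat.gcdB m (eOf r β) : ℤ) : ZMod M))
            * chi M a β x := by rw [h1]; push_cast; ring
        _ = ((Nat.gcdA m (eOf r β) : ℤ) : ZMod M) * (((m:ℕ) : ZMod M) * chi M a β x)
            + ((Nat.gcdB m (eOf r β) : ℤ) : ZMod M)
              * (((eOf r β : ℕ) : ZMod M) * chi M a β x) := by push_cast; ring
        _ = 0 := by rw [← hmul x, h, hzero, mul_zero, mul_zero, add_zero]
    ext ω
    rw [hmem β ω, hmem β' ω]
    constructor
    · rintro ⟨h1, h2⟩; exact ⟨h1, (H _).mp h2⟩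
    · rintro ⟨h1, h2⟩; exact ⟨h1, (H _).mpr h2⟩
end

section
/- Let p be a prime dividing r_n and β ∈ R'. Then |A_{β,p}| = p^{v_p(|G|) − v_p(e(β))}, where |G| = r_1⋯r_n. -/
open Finset AddSubgroup



lemma cast_inj_Icc {N a b : ℕ} (ha : a ∈ Finset.Icc 1 N) (hb : b ∈ Finset.Icc 1 N)
    (h : (a : ZMod N) = (b : ZMod N)) : a = b := by
  simp only [Finset.mem_Icc] at ha hb
  rw [ZMod.natCast_eq_natCast_iff'] at h
  rcases lt_or_eq_of_le ha.2 with h1 | h1 <;> rcases lt_or_eq_of_le hb.2 with h2 | h2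
  · rwa [Nat.mod_eq_of_lt h1, Nat.mod_eq_of_lt h2] at h
  · subst h2; rw [Nat.mod_eq_of_lt h1, Nat.mod_self] at h; omega
  · subst h1; rw [Nat.mod_eq_of_lt h2, Nat.mod_self] at h; omega
  · omega

lemma count_lemma {n : ℕ} (N : Fin (n+1) → ℕ) [inst : ∀ j, NeZero (N j)]
    (M : ℕ) (hM : 1 < M) (c : Fin (n+1) → ℕ)
    (hc : ∀ j, M ∣ c j * N j) (e : ℕ) (he : e ∣ M)
    (hle : ∀ j, (M / e) ∣ c j)
    (hge : ∃ j0 x, (x * c j0) % M = (M / e) % M) :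
    ((Fintype.piFinset fun j => Finset.Icc 1 (N j)).filter
      (fun ω => (∑ j, c j * ω j) % M = 0)).card * e = ∏ j, N j := by
  classical
  haveI : NeZero M := ⟨by omega⟩
  have hker0 : ∀ j, ((AddMonoidHom.mulLeft ((c j : ZMod M))).comp (Int.castAddHom (ZMod M)))
      ((N j : ℕ) : ℤ) = 0 := by
    intro j
    simp only [AddMonoidHom.coe_comp, Function.comp_apply, Int.coe_castAddHom,
      AddMonoidHom.coe_mulLeft]
    push_cast
    rw [← Nat.cast_mul, ZMod.natCast_eq_zero_iff]
    exact hc j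
  set f : ∀ j, ZMod (N j) →+ ZMod M := fun j =>
    ZMod.lift (N j) ⟨(AddMonoidHom.mulLeft ((c j : ZMod M))).comp (Int.castAddHom (ZMod M)),
      hker0 j⟩ with hf
  set φ : (∀ j, ZMod (N j)) →+ ZMod M :=
    ∑ j, (f j).comp (Pi.evalAddMonoidHom (fun j => ZMod (N j)) j) with hφdef
  have hfval : ∀ j (x : ℕ), f j ((x : ℕ) : ZMod (N j)) = ((c j * x : ℕ) : ZMod M) := by
    intro j x
    have := ZMod.lift_coe (N j)
      ⟨(AddMonoidHom.mulLeft ((c j : ZMod M))).comp (Int.castAddHom (ZMod M)), hker0 j⟩ (x : ℤ)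
    simp only [AddMonoidHom.coe_comp, Function.comp_apply, Int.coe_castAddHom,
      AddMonoidHom.coe_mulLeft] at this
    rw [hf]
    push_cast at this ⊢
    exact this
  have hφ : ∀ w : Fin (n+1) → ℕ,
      φ (fun j => ((w j : ℕ) : ZMod (N j))) = ((∑ j, c j * w j : ℕ) : ZMod M) := by
    intro w
    rw [hφdef]
    simp only [AddMonoidHom.finset_sum_apply, AddMonoidHom.coe_comp, Function.comp_apply,
      Pi.evalAddMonoidHom_apply, hfval, Nat.cast_sum]
  -- range
  have hrange : φ.range = AddSubgroup.zmultiples (((M / e : ℕ) : ZMod M)) := by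
    apply le_antisymm
    · rintro _ ⟨ω, rfl⟩
      have hω : ω = fun j => (((ω j).val : ℕ) : ZMod (N j)) := by
        funext j; exact (ZMod.natCast_rightInverse (ω j)).symm
      rw [hω, hφ]
      obtain ⟨k, hk⟩ : (M / e) ∣ ∑ j, c j * (ω j).val :=
        Finset.dvd_sum (fun j _ => (hle j).mul_right _)
      rw [hk, Nat.cast_mul]
      exact ⟨(k : ℤ), by show (k:ℤ) • ((M / e : ℕ) : ZMod M) = _; rw [zsmul_eq_mul]; push_cast; ring⟩
    · rw [AddSubgroup.zmultiples_le]
      obtain ⟨j0, x, hx⟩ := hge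
      refine ⟨fun j => (((if j = j0 then x else 0 : ℕ)) : ZMod (N j)), ?_⟩
      rw [hφ]
      have : (∑ j, c j * (if j = j0 then x else 0)) = c j0 * x := by
        rw [Finset.sum_eq_single j0 (fun b _ hb => by simp [hb]) (by simp)]
        simp
      rw [this, ZMod.natCast_eq_natCast_iff']
      rwa [mul_comm] at hx
  have hrangecard : Nat.card φ.range = e := by
    rw [hrange, Nat.card_zmultiples, ZMod.addOrderOf_coe _ (NeZero.ne M),
      Nat.gcd_eq_right (Nat.div_dvd_of_dvd he), Nat.div_div_self he (NeZero.ne M)]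
  -- cardinality chain
  have hdom : Nat.card (∀ j, ZMod (N j)) = ∏ j, N j := by
    simp [Nat.card_pi, Nat.card_zmod]
  have hquot : Nat.card ((∀ j, ZMod (N j)) ⧸ φ.ker) = e := by
    rw [Nat.card_congr (QuotientAddGroup.quotientKerEquivRange φ).toEquiv, hrangecard]
  have hsplit := AddSubgroup.card_eq_card_quotient_mul_card_addSubgroup φ.ker
  rw [hdom, hquot] at hsplit
  -- filter card = Nat.card ker
  have hkercard : Nat.card φ.ker =
      (Finset.univ.filter (fun z : ∀ j, ZMod (N j) => φ z = 0)).card := by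
    rw [Nat.card_congr (Equiv.subtypeEquivRight (fun x => φ.mem_ker)),
      Nat.card_eq_fintype_card, Fintype.card_subtype]
  have hbij : ((Fintype.piFinset fun j => Finset.Icc 1 (N j)).filter
      (fun ω => (∑ j, c j * ω j) % M = 0)).card
      = (Finset.univ.filter (fun z : ∀ j, ZMod (N j) => φ z = 0)).card := by
    apply Finset.card_bij (fun ω _ => fun j => ((ω j : ℕ) : ZMod (N j)))
    · intro ω hω
      simp only [Finset.mem_filter, Fintype.mem_piFinset] at hω
      simp only [Finset.mem_filter, Finset.mem_univ, true_and, hφ]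
      rw [ZMod.natCast_eq_zero_iff]
      exact Nat.dvd_of_mod_eq_zero hω.2
    · intro ω₁ h₁ ω₂ h₂ heq
      simp only [Finset.mem_filter, Fintype.mem_piFinset] at h₁ h₂
      funext j
      exact cast_inj_Icc (h₁.1 j) (h₂.1 j) (congrFun heq j)
    · intro z hz
      simp only [Finset.mem_filter, Finset.mem_univ, true_and] at hz
      refine ⟨fun j => if (z j).val = 0 then N j else (z j).val, ?_, ?_⟩
      · have hcast : (fun j => (((if (z j).val = 0 then N j else (z j).val) : ℕ) : ZMod (N j))) = z := by
          funext j
          split_ifs with h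
          · rw [ZMod.natCast_self]
            exact (((ZMod.val_eq_zero _).mp h)).symm
          · exact ZMod.natCast_rightInverse (z j)
        simp only [Finset.mem_filter, Fintype.mem_piFinset, Finset.mem_Icc]
        constructor
        · intro j
          constructor
          · split_ifs with h
            · exact (NeZero.pos (N j))
            · omega
          · split_ifs with h
            · exact le_refl _
            · exact le_of_lt (ZMod.val_lt (z j))
        · have := hφ (fun j => if (z j).val = 0 then N j else (z j).val)
          rw [hcast, hz] at this
          exact Nat.mod_eq_zero_of_dvd ((ZMod.natCast_eq_zero_iff _ _).mp this.symm)
      · funext j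
        simp only []
        split_ifs with h
        · rw [ZMod.natCast_self]
          exact (((ZMod.val_eq_zero _).mp h)).symm
        · exact ZMod.natCast_rightInverse (z j)
  rw [hbij, ← hkercard, hsplit]
  exact mul_comm _ _

lemma padicValNat_lcm' {p a b : ℕ} (hp : p.Prime) (ha : a ≠ 0) (hb : b ≠ 0) :
    padicValNat p (Nat.lcm a b) = max (padicValNat p a) (padicValNat p b) := by
  rw [← Nat.factorization_def _ hp, Nat.factorization_lcm ha hb, Finsupp.sup_apply,
    Nat.factorization_def _ hp, Nat.factorization_def _ hp]

lemma finset_lcm_ne_zero {ι : Type*} (s : Finset ι) (f : ι → ℕ)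
    (hf : ∀ i ∈ s, f i ≠ 0) : s.lcm f ≠ 0 := by
  classical
  induction s using Finset.induction with
  | empty => simp
  | @insert a s ha ih =>
    rw [Finset.lcm_insert]
    have h1 : f a ≠ 0 := hf a (Finset.mem_insert_self a s)
    have h2 : s.lcm f ≠ 0 := ih (fun i hi => hf i (Finset.mem_insert_of_mem hi))
    rw [lcm_eq_nat_lcm]
    exact Nat.lcm_ne_zero h1 h2

lemma padicValNat_finset_lcm {ι : Type*} {p : ℕ} (hp : p.Prime) (s : Finset ι) (f : ι → ℕ)
    (hf : ∀ i ∈ s, f i ≠ 0) :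
    padicValNat p (s.lcm f) = s.sup fun i => padicValNat p (f i) := by
  classical
  induction s using Finset.induction with
  | empty => simp [padicValNat.one]
  | @insert a s ha ih =>
    rw [Finset.lcm_insert, Finset.sup_insert]
    have h1 : f a ≠ 0 := hf a (Finset.mem_insert_self a s)
    have h2 : s.lcm f ≠ 0 := finset_lcm_ne_zero s f (fun i hi => hf i (Finset.mem_insert_of_mem hi))
    rw [lcm_eq_nat_lcm, padicValNat_lcm' hp h1 h2,
      ih (fun i hi => hf i (Finset.mem_insert_of_mem hi))]

lemma padicValNat_finset_prod {ι : Type*} {p : ℕ} (hp : p.Prime) (s : Finset ι) (f : ι → ℕ)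
    (hf : ∀ i ∈ s, f i ≠ 0) :
    padicValNat p (∏ i ∈ s, f i) = ∑ i ∈ s, padicValNat p (f i) := by
  rw [← Nat.factorization_def _ hp, Nat.factorization_prod hf, Finsupp.finset_sum_apply]
  exact Finset.sum_congr rfl fun i _ => Nat.factorization_def _ hp

lemma padicValNat_mono {p a b : ℕ} (hp : p.Prime) (ha : a ≠ 0) (hb : b ≠ 0) (h : a ∣ b) :
    padicValNat p a ≤ padicValNat p b := by
  have := (Nat.factorization_le_iff_dvd ha hb).mpr h
  rw [← Nat.factorization_def _ hp, ← Nat.factorization_def _ hp]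
  exact this p

lemma padicValNat_div_gcd {p a b : ℕ} (hp : p.Prime) (ha : a ≠ 0) (hb : b ≠ 0) :
    padicValNat p (a / Nat.gcd a b) =
      padicValNat p a - min (padicValNat p a) (padicValNat p b) := by
  have hg : Nat.gcd a b ∣ a := Nat.gcd_dvd_left a b
  rw [← Nat.factorization_def _ hp, Nat.factorization_div hg, Finsupp.tsub_apply,
    Nat.factorization_gcd ha hb, Finsupp.inf_apply,
    Nat.factorization_def _ hp, Nat.factorization_def _ hp]

theorem stmt_16 (r : Fin (n+1) → ℕ) (hr : ∀ j, 0 < r j)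
    (hchain : ∀ i j : Fin (n+1), i ≤ j → r i ∣ r j)
    (p : ℕ) (hp : p.Prime) (hpr : p ∣ r (Fin.last n))
    (β : Fin (n+1) → ℕ) (hβ : β ∈ Rfin' r) :
    (Apset r p β).card = p ^ (padicValNat p (cardG r) - padicValNat p (eOf r β)) := by
  classical
  haveI hfact : Fact p.Prime := ⟨hp⟩
  have hrne : ∀ j, r j ≠ 0 := fun j => (hr j).ne'
  -- abbreviations
  let m : ℕ := padicValNat p (r (Fin.last n))
  let v : Fin (n+1) → ℕ := fun j => padicValNat p (r j)
  let w : Fin (n+1) → ℕ := fun j => padicValNat p (r j / Nat.gcd (r j) (β j))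
  let V : ℕ := Finset.univ.sup w
  -- the lcm factors are nonzero
  have hfne : ∀ j, r j / Nat.gcd (r j) (β j) ≠ 0 := by
    intro j
    have hgpos : 0 < Nat.gcd (r j) (β j) := Nat.gcd_pos_of_pos_left (β j) (hr j)
    exact (Nat.div_pos (Nat.le_of_dvd (hr j) (Nat.gcd_dvd_left _ _)) hgpos).ne'
  have hVsup : padicValNat p (eOf r β) = V :=
    padicValNat_finset_lcm hp _ _ (fun j _ => hfne j)
  have hwj : ∀ j, β j ≠ 0 → w j = v j - min (v j) (padicValNat p (β j)) :=
    fun j hbj => padicValNat_div_gcd hp (hrne j) hbj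
  have hwj0 : ∀ j, β j = 0 → w j = 0 := by
    intro j h
    show padicValNat p _ = 0
    rw [h, Nat.gcd_zero_right, Nat.div_self (hr j)]
    exact padicValNat.one
  have hwv : ∀ j, w j ≤ v j := by
    intro j
    by_cases h : β j = 0
    · rw [hwj0 j h]; omega
    · rw [hwj j h]; omega
  have hvm : ∀ j, v j ≤ m :=
    fun j => padicValNat_mono hp (hrne j) (hrne _) (hchain j (Fin.last n) (Fin.le_last j))
  have hm1 : 1 ≤ m := by
    have := (padicValNat_dvd_iff (p := p) 1 (r (Fin.last n))).mp (by simpa using hpr)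
    rcases this with h | h
    · exact absurd h (hrne _)
    · exact h
  have hVm : V ≤ m := Finset.sup_le fun j _ => le_trans (hwv j) (hvm j)
  have hwV : ∀ j, w j ≤ V := fun j => Finset.le_sup (Finset.mem_univ j)
  -- set up count_lemma
  haveI : ∀ j, NeZero (p ^ v j) := fun j => ⟨pow_ne_zero _ hp.pos.ne'⟩
  have hM1 : 1 < p ^ m := Nat.one_lt_pow (by omega) hp.one_lt
  have hc : ∀ j, p ^ m ∣ (p ^ (m - v j) * β j) * p ^ v j := by
    intro j
    have : (p ^ (m - v j) * β j) * p ^ v j = p ^ m * β j := by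
      rw [mul_right_comm, ← pow_add]
      congr 2
      have := hvm j
      omega
    rw [this]
    exact Dvd.intro _ rfl
  have hle : ∀ j, p ^ m / p ^ V ∣ p ^ (m - v j) * β j := by
    intro j
    rw [Nat.pow_div hVm hp.pos]
    by_cases hb : β j = 0
    · simp [hb]
    · have h1 : p ^ padicValNat p (β j) ∣ β j := pow_padicValNat_dvd
      have h2 : p ^ (m - V) ∣ p ^ (m - v j + padicValNat p (β j)) := by
        apply pow_dvd_pow
        have := hwj j hb
        have := hwV j
        have := hvm j
        omega
      exact dvd_trans h2 (by rw [pow_add]; exact mul_dvd_mul_left _ h1)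
  have hge : ∃ j0 x, (x * (p ^ (m - v j0) * β j0)) % p ^ m = (p ^ m / p ^ V) % p ^ m := by
    rw [Nat.pow_div hVm hp.pos]
    by_cases hV : V = 0
    · refine ⟨0, 0, ?_⟩
      rw [hV, Nat.sub_zero, Nat.mod_self, zero_mul, Nat.zero_mod]
    · obtain ⟨j0, -, hj0⟩ := Finset.exists_mem_eq_sup Finset.univ Finset.univ_nonempty w
      have hb : β j0 ≠ 0 := by
        intro h
        rw [hwj0 j0 h] at hj0
        exact hV hj0
      have hwj0' : w j0 = v j0 - min (v j0) (padicValNat p (β j0)) := hwj j0 hb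
      have hVj0 : V = w j0 := hj0
      have hvb : padicValNat p (β j0) < v j0 := by
        rcases le_or_gt (v j0) (padicValNat p (β j0)) with h | h
        · exfalso; apply hV; rw [hVj0, hwj0']; omega
        · exact h
      have hVval : V = v j0 - padicValNat p (β j0) := by
        rw [hVj0, hwj0']; omega
      -- decompose β j0
      set vb := padicValNat p (β j0) with hvbdef
      set b := β j0 / p ^ vb with hbdef
      have hbe : β j0 = p ^ vb * b := by
        have := Nat.ordProj_mul_ordCompl_eq_self (β j0) p
        rw [Nat.factorization_def _ hp] at this
        exact this.symm
      have hpb : ¬ p ∣ b := by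
        have := Nat.not_dvd_ordCompl hp hb
        rwa [Nat.factorization_def _ hp] at this
      have hcop : Nat.Coprime b (p ^ m) :=
        Nat.Coprime.pow_right _ ((hp.coprime_iff_not_dvd.mpr hpb).symm)
      obtain ⟨x, -, hx⟩ := Nat.exists_mul_mod_eq_one_of_coprime hcop hM1
      refine ⟨j0, x, ?_⟩
      have hcj0 : p ^ (m - v j0) * β j0 = p ^ (m - V) * b := by
        rw [hbe, ← mul_assoc, ← pow_add]
        congr 2
        have := hvm j0
        omega
      rw [hcj0]
      have hmod : (b * x) % p ^ m = 1 % p ^ m := by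
        rw [hx, Nat.mod_eq_of_lt hM1]
      calc (x * (p ^ (m - V) * b)) % p ^ m
          = (p ^ (m - V) * (b * x)) % p ^ m := by rw [show x * (p ^ (m - V) * b) = p ^ (m - V) * (b * x) by ring]
        _ = (p ^ (m - V) * 1) % p ^ m := Nat.ModEq.mul_left _ hmod
        _ = p ^ (m - V) % p ^ m := by rw [mul_one]
  have key := count_lemma (fun j => p ^ v j) (p ^ m) hM1 (fun j => p ^ (m - v j) * β j) hc
    (p ^ V) (pow_dvd_pow p hVm) hle hge
  have hA : Apset r p β = (Fintype.piFinset fun j => Finset.Icc 1 (p ^ v j)).filter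
      (fun ω => (∑ j, (p ^ (m - v j) * β j) * ω j) % p ^ m = 0) := by
    unfold Apset
    refine Finset.filter_congr fun ω _ => ?_
    have hsum : (∑ j, p ^ (padicValNat p (r (Fin.last n)) - padicValNat p (r j)) * ω j * β j)
        = ∑ j, (p ^ (m - v j) * β j) * ω j :=
      Finset.sum_congr rfl fun j _ => by
        show p ^ (padicValNat p (r (Fin.last n)) - padicValNat p (r j)) * ω j * β j
          = (p ^ (padicValNat p (r (Fin.last n)) - padicValNat p (r j)) * β j) * ω j
        ring
    rw [hsum]
  have hprod : (∏ j, p ^ v j) = p ^ (∑ j, v j) := Finset.prod_pow_eq_pow_sum _ _ _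
  have hcardG : padicValNat p (cardG r) = ∑ j, v j :=
    padicValNat_finset_prod hp _ _ (fun j _ => hrne j)
  have hVsum : V ≤ ∑ j, v j := le_trans hVm
    (Finset.single_le_sum (f := v) (fun j _ => Nat.zero_le _) (Finset.mem_univ (Fin.last n)))
  rw [hA, hcardG, hVsup]
  have hVpos : 0 < p ^ V := pow_pos hp.pos V
  apply Nat.eq_of_mul_eq_mul_right hVpos
  have h2 : p ^ ((∑ j, v j) - V) * p ^ V = p ^ (∑ j, v j) := by
    rw [← pow_add, Nat.sub_add_cancel hVsum]
  rw [h2]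
  exact key.trans hprod
end
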